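/- arXiv:1309.6070 — 6 statements merged into one kernel-verified Lean document; each statement's English description precedes it below -/
import Mathlib

section
/- For every oriented word u of rank k ≥ 2 and every element g of the free group F_k, τ_u(g) + τ_u(g^{-1}) = 0. -/
open FreeGroup

/-- A letter over the alphabet `{a_1,...,a_k, a_1⁻¹,...,a_k⁻¹}`:
`(i, true)` is the positive letter `a_i`, `(i, false)` is `a_i⁻¹`. -/
abbrev Letter (k : ℕ) := Fin k × Bool

/-- Formal inverse of a letter. -/
def invL {k : ℕ} (x : Letter k) : Letter k := (x.1, !x.2)

/-- An oriented word of rank `k`: each of the `2k` letters appears exactly once. -/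
def IsOriented {k : ℕ} (u : List (Letter k)) : Prop :=
  u.Nodup ∧ ∀ x : Letter k, x ∈ u

/-- `x` occurs to the left of `y` in `u`. -/
def leftOf {k : ℕ} (u : List (Letter k)) (x y : Letter k) : Prop :=
  u.idxOf x < u.idxOf y

instance {k : ℕ} (u : List (Letter k)) (x y : Letter k) : Decidable (leftOf u x y) :=
  inferInstanceAs (Decidable (_ < _))

/-- Number of occurrences of the two-letter word `xy` as a contiguous subword of `L`. -/
def cnt {k : ℕ} (L : List (Letter k)) (x y : Letter k) : ℕ :=
  (L.zip L.tail).count (x, y)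

/-- The case transition weight `α_u`, on a reduced word `L`. -/
noncomputable def alphaW {k : ℕ} (u L : List (Letter k)) : ℝ :=
  (∑ a : Fin k, ∑ b : Fin k,
      if leftOf u (a, false) (b, false) then (cnt L (a, true) (b, false) : ℝ) else 0)
  - ∑ a : Fin k, ∑ b : Fin k,
      if leftOf u (a, true) (b, true) then (cnt L (b, false) (a, true) : ℝ) else 0

/-- The letter transition weight `β_u`, on a reduced word `L`. -/
noncomputable def betaW {k : ℕ} (u L : List (Letter k)) : ℝ :=
  (∑ a : Fin k, ∑ b : Fin k,
      if leftOf u (a, false) (b, true) then (cnt L (a, true) (b, true) : ℝ) else 0)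
  - ∑ a : Fin k, ∑ b : Fin k,
      if leftOf u (a, false) (b, true) then (cnt L (b, false) (a, false) : ℝ) else 0

/-- The last letter weight `ω`, on a reduced word `L`. -/
noncomputable def omegaW {k : ℕ} (L : List (Letter k)) : ℝ :=
  match L.getLast? with
  | none => 0
  | some x => if x.2 then 1 / 2 else -(1 / 2)

/-- The weight `τ_u` induced by an oriented word `u`, evaluated on the reduced form. -/
noncomputable def tau {k : ℕ} (u : List (Letter k)) (g : FreeGroup (Fin k)) : ℝ :=
  alphaW u g.toWord + betaW u g.toWord + omegaW g.toWord

/-- The weight contribution `wtc_u` of a reduced two-letter word `xy`. -/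
noncomputable def wtc {k : ℕ} (u : List (Letter k)) (x y : Letter k) : ℝ :=
  if x.2 then (if leftOf u (x.1, false) y then 1 else 0)
  else (if leftOf u y (x.1, true) then -1 else 0)

/-- The inverse word of `u`. -/
def invWord {k : ℕ} (u : List (Letter k)) : List (Letter k) := (u.map invL).reverse

/-- A function `τ : G → ℝ` with small relative defect. -/
def SmallRelDefect {G : Type*} [Group G] (τ : G → ℝ) : Prop :=
  τ 1 = 0 ∧ ∀ g h : G, (g ≠ 1 ∨ h ≠ 1) → |τ g + τ h - τ (g * h)| < |τ g| + |τ h|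




/-- adjacent pairs -/
def zp (L : List α) : List (α × α) := L.zip L.tail

lemma zp_nil : zp ([] : List α) = [] := rfl
lemma zp_single (x : α) : zp [x] = [] := rfl
lemma zp_cons2 (x y : α) (t : List α) : zp (x :: y :: t) = (x, y) :: zp (y :: t) := rfl

lemma zp_map (f : α → β) : ∀ L : List α, zp (L.map f) = (zp L).map (Prod.map f f)
  | [] => rfl
  | [x] => rfl
  | x :: y :: t => by
    rw [List.map_cons, List.map_cons, zp_cons2, zp_cons2, ← List.map_cons (f := f) (a := y) (l := t),
      zp_map f (y :: t), List.map_cons]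
    rfl

lemma zp_append_singleton (a : α) : ∀ L : List α,
    zp (L ++ [a]) = zp L ++ (match L.getLast? with | none => [] | some b => [(b, a)])
  | [] => rfl
  | [x] => rfl
  | x :: y :: t => by
    have := zp_append_singleton a (y :: t)
    simp only [List.cons_append, zp_cons2] at this ⊢
    rw [this]
    simp [List.getLast?]

lemma zp_reverse : ∀ L : List α, zp L.reverse = ((zp L).map Prod.swap).reverse
  | [] => rfl
  | [x] => rfl
  | x :: y :: t => by
    have ih := zp_reverse (y :: t)
    have h1 : (x :: y :: t).reverse = (y :: t).reverse ++ [x] := by simp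
    rw [h1, zp_append_singleton, ih]
    have h2 : (y :: t).reverse.getLast? = some y := by
      simp [List.getLast?_reverse]
    rw [h2]
    simp [zp_cons2]

lemma mem_zp_decomp {x y : α} : ∀ {L : List α}, (x, y) ∈ zp L →
    ∃ l₁ l₂, L = l₁ ++ x :: y :: l₂
  | [] => by simp [zp_nil]
  | [z] => by simp [zp_single]
  | z :: w :: t => by
    rw [zp_cons2]
    intro h
    rcases List.mem_cons.mp h with h | h
    · obtain ⟨h1, h2⟩ : x = z ∧ y = w := by simpa [Prod.ext_iff] using h
      exact ⟨[], t, by simp [h1, h2]⟩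
    · obtain ⟨l₁, l₂, hl⟩ := mem_zp_decomp h
      exact ⟨z :: l₁, l₂, by simp [hl]⟩

section Aux
variable {α β : Type*} {k : ℕ}

lemma cnt_eq_count (L : List (Letter k)) (x y : Letter k) :
    cnt L x y = (zp L).count (x, y) := rfl

lemma invL_invL (x : Letter k) : invL (invL x) = x := by
  simp [invL]

lemma invL_injective : Function.Injective (invL (k := k)) := by
  intro a b h
  have := congrArg invL h
  rwa [invL_invL, invL_invL] at this

lemma count_map_of_inj {α β : Type*} [BEq α] [LawfulBEq α] [BEq β] [LawfulBEq β]
    (l : List α) (f : α → β) (hf : Function.Injective f) (x : α) :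
    (l.map f).count (f x) = l.count x := by
  induction l with
  | nil => simp
  | cons a t ih =>
    rw [List.map_cons, List.count_cons, List.count_cons, ih]
    congr 1
    rcases eq_or_ne a x with h | h
    · simp [h]
    · rw [if_neg (by simp; exact fun hc => h (hf hc)), if_neg (by simp [h])]

lemma invRev_eq (L : List (Letter k)) : FreeGroup.invRev L = (L.map invL).reverse := rfl

lemma cnt_invRev (L : List (Letter k)) (x y : Letter k) :
    cnt (FreeGroup.invRev L) x y = cnt L (invL y) (invL x) := by
  rw [cnt_eq_count, cnt_eq_count, invRev_eq, zp_reverse, zp_map, List.count_reverse,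
    List.map_map]
  have h1 : ((x, y) : Letter k × Letter k)
      = (Prod.swap ∘ Prod.map invL invL) (invL y, invL x) := by
    simp [invL_invL, Prod.map, Prod.swap, Function.comp]
  rw [h1]
  exact count_map_of_inj _ _
    (Prod.swap_injective.comp (invL_injective.prodMap invL_injective)) _

lemma cnt_toWord_cancel (g : FreeGroup (Fin k)) (x : Letter k) :
    cnt g.toWord x (invL x) = 0 := by
  by_contra h
  have hm : (x, invL x) ∈ zp g.toWord := by
    rw [cnt_eq_count] at h
    exact List.count_pos_iff.mp (Nat.pos_of_ne_zero h)
  obtain ⟨l₁, l₂, hl⟩ := mem_zp_decomp hm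
  exact FreeGroup.reduce.not (L₂ := l₁) (L₃ := l₂) (x := x.1) (b := x.2)
    (by rw [FreeGroup.reduce_toWord, hl]; rfl)

end Aux

section Main
variable {k : ℕ}

/-- head value -/
noncomputable def hdv (L : List (Letter k)) : ℝ :=
  match L.head? with | none => 0 | some x => if x.2 then 1 else 0

/-- last value -/
noncomputable def lsv (L : List (Letter k)) : ℝ :=
  match L.getLast? with | none => 0 | some x => if x.2 then 1 else 0

lemma sum_indic (s t : Bool) (z : Letter k × Letter k) :
    (∑ a : Fin k, ∑ b : Fin k, if ((a, s), (b, t)) = z then (1 : ℝ) else 0)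
      = if z.1.2 = s ∧ z.2.2 = t then 1 else 0 := by
  obtain ⟨⟨i, s'⟩, ⟨j, t'⟩⟩ := z
  rcases eq_or_ne s' s with hs | hs
  · rcases eq_or_ne t' t with ht | ht
    · subst hs; subst ht
      simp [Prod.ext_iff, ite_and, Finset.sum_ite_eq']
    · have ht' : ¬ (t = t') := fun h => ht h.symm
      simp [Prod.ext_iff, ht', ht]
  · have hs' : ¬ (s = s') := fun h => hs h.symm
    simp [Prod.ext_iff, hs', hs]

lemma cnt_cons2 (x y : Letter k) (t : List (Letter k)) (p q : Letter k) :
    cnt (x :: y :: t) p q = cnt (y :: t) p q + (if (p, q) = (x, y) then 1 else 0) := by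
  rw [cnt_eq_count, cnt_eq_count, zp_cons2, List.count_cons]
  congr 1
  rcases eq_or_ne ((p, q) : Letter k × Letter k) (x, y) with h | h
  · rw [if_pos (by rw [← h]; exact beq_self_eq_true _), if_pos h]
  · rw [if_neg (fun hb => h (eq_of_beq hb).symm), if_neg h]

lemma tele : ∀ L : List (Letter k),
    ((∑ a : Fin k, ∑ b : Fin k, (cnt L (a, true) (b, false) : ℝ))
      - ∑ a : Fin k, ∑ b : Fin k, (cnt L (a, false) (b, true) : ℝ))
      = hdv L - lsv L
  | [] => by simp [hdv, lsv, cnt]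
  | [x] => by simp [hdv, lsv, cnt]
  | x :: y :: t => by
    have ih := tele (y :: t)
    have h1 : ∀ s u : Bool, (∑ a : Fin k, ∑ b : Fin k,
        (cnt (x :: y :: t) (a, s) (b, u) : ℝ))
        = (∑ a : Fin k, ∑ b : Fin k, (cnt (y :: t) (a, s) (b, u) : ℝ))
          + (if x.2 = s ∧ y.2 = u then 1 else 0) := by
      intro s u
      rw [← sum_indic s u (x, y), ← Finset.sum_add_distrib]
      refine Finset.sum_congr rfl fun a _ => ?_
      rw [← Finset.sum_add_distrib]
      refine Finset.sum_congr rfl fun b _ => ?_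
      rw [cnt_cons2]
      push_cast
      rfl
    rw [h1, h1]
    have hlsv : lsv (x :: y :: t) = lsv (y :: t) := by
      simp [lsv, List.getLast?]
    have hhd : hdv (x :: y :: t) = (if x.2 then (1:ℝ) else 0) := rfl
    have hhd' : hdv (y :: t) = (if y.2 then (1:ℝ) else 0) := rfl
    rw [hlsv, hhd]
    rw [hhd'] at ih
    cases hx : x.2 <;> cases hy : y.2 <;> simp [hx, hy] at ih ⊢ <;> linarith

lemma indexOf_inj' {α : Type*} [BEq α] [LawfulBEq α] :
    ∀ {l : List α} {x y : α}, x ∈ l → y ∈ l → l.idxOf x = l.idxOf y → x = y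
  | [], x, _, hx, _, _ => absurd hx List.not_mem_nil
  | a :: t, x, y, hx, hy, h => by
    have hcons : ∀ z : α, (a :: t).idxOf z = bif a == z then 0 else t.idxOf z + 1 :=
      fun z => List.idxOf_cons
    rw [hcons, hcons] at h
    by_cases hax : a = x <;> by_cases hay : a = y
    · exact hax.symm.trans hay
    · subst hax
      have h2 : (a == y) = false := by simp [hay]
      rw [h2, cond_false, beq_self_eq_true, cond_true] at h
      omega
    · subst hay
      have h1 : (a == x) = false := by simp [hax]
      rw [h1, cond_false, beq_self_eq_true, cond_true] at h
      omega
    · have h1 : (a == x) = false := by simp [hax]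
      have h2 : (a == y) = false := by simp [hay]
      rw [h1, h2, cond_false, cond_false] at h
      have hx' : x ∈ t := by
        rcases List.mem_cons.mp hx with h' | h'
        · exact absurd h'.symm hax
        · exact h'
      have hy' : y ∈ t := by
        rcases List.mem_cons.mp hy with h' | h'
        · exact absurd h'.symm hay
        · exact h'
      exact indexOf_inj' hx' hy' (by omega)

lemma sum_dichotomy {u : List (Letter k)} (hnd : u.Nodup) (hmem : ∀ x : Letter k, x ∈ u)
    (s : Bool) (c : Fin k → Fin k → ℝ) (hc : ∀ a, c a a = 0) :
    ((∑ a : Fin k, ∑ b : Fin k, if leftOf u (a, s) (b, s) then c a b else 0)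
      + ∑ a : Fin k, ∑ b : Fin k, if leftOf u (b, s) (a, s) then c a b else 0)
      = ∑ a : Fin k, ∑ b : Fin k, c a b := by
  rw [← Finset.sum_add_distrib]
  refine Finset.sum_congr rfl fun a _ => ?_
  rw [← Finset.sum_add_distrib]
  refine Finset.sum_congr rfl fun b _ => ?_
  rcases eq_or_ne a b with rfl | hab
  · simp [hc]
  · have hne : ((a, s) : Letter k) ≠ (b, s) := by simp [hab]
    have hidx : u.idxOf ((a, s) : Letter k) ≠ u.idxOf ((b, s) : Letter k) :=
      fun h => hne (indexOf_inj' (hmem _) (hmem _) h)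
    rcases hidx.lt_or_gt with h | h
    · have hp : leftOf u (a, s) (b, s) := h
      have h2 : ¬ leftOf u (b, s) (a, s) := fun h' => lt_asymm h h'
      rw [if_pos hp, if_neg h2, add_zero]
    · have hp : leftOf u (b, s) (a, s) := h
      have h2 : ¬ leftOf u (a, s) (b, s) := fun h' => lt_asymm h h'
      rw [if_neg h2, if_pos hp, zero_add]

lemma invL_pos (a : Fin k) : invL ((a, false) : Letter k) = (a, true) := rfl
lemma invL_neg (a : Fin k) : invL ((a, true) : Letter k) = (a, false) := rfl

lemma betaW_invRev (u L : List (Letter k)) :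
    betaW u (FreeGroup.invRev L) = - betaW u L := by
  unfold betaW
  simp only [cnt_invRev, invL_pos, invL_neg]
  ring

lemma alpha_pair {u : List (Letter k)} (hnd : u.Nodup) (hmem : ∀ x : Letter k, x ∈ u)
    (L : List (Letter k))
    (hc : ∀ a : Fin k, cnt L (a, true) (a, false) = 0)
    (hc' : ∀ a : Fin k, cnt L (a, false) (a, true) = 0) :
    alphaW u L + alphaW u (FreeGroup.invRev L)
      = (∑ a : Fin k, ∑ b : Fin k, (cnt L (a, true) (b, false) : ℝ))
        - ∑ a : Fin k, ∑ b : Fin k, (cnt L (a, false) (b, true) : ℝ) := by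
  unfold alphaW
  simp only [cnt_invRev, invL_pos, invL_neg]
  have e1 : (∑ a : Fin k, ∑ b : Fin k,
        if leftOf u (a, false) (b, false) then (cnt L (b, true) (a, false) : ℝ) else 0)
      = ∑ a : Fin k, ∑ b : Fin k,
        if leftOf u (b, false) (a, false) then (cnt L (a, true) (b, false) : ℝ) else 0 :=
    Finset.sum_comm
  have e2 : (∑ a : Fin k, ∑ b : Fin k,
        if leftOf u (a, true) (b, true) then (cnt L (b, false) (a, true) : ℝ) else 0)
      = ∑ a : Fin k, ∑ b : Fin k,
        if leftOf u (b, true) (a, true) then (cnt L (a, false) (b, true) : ℝ) else 0 :=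
    Finset.sum_comm
  rw [e1, e2]
  have d1 := sum_dichotomy hnd hmem false (fun a b => (cnt L (a, true) (b, false) : ℝ))
    (fun a => by simp [hc a])
  have d2 := sum_dichotomy hnd hmem true (fun a b => (cnt L (a, false) (b, true) : ℝ))
    (fun a => by simp [hc' a])
  linarith

lemma omega_pair (L : List (Letter k)) :
    omegaW L + omegaW (FreeGroup.invRev L) = lsv L - hdv L := by
  cases L with
  | nil => simp [FreeGroup.invRev, omegaW, hdv, lsv]
  | cons x t =>
    have hy : (x :: t).getLast? = some ((x :: t).getLast (by simp)) :=
      List.getLast?_eq_getLast_of_ne_nil (by simp)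
    have hlast' : (FreeGroup.invRev (x :: t)).getLast? = some (invL x) := by
      rw [invRev_eq, List.getLast?_reverse]
      simp
    unfold omegaW hdv lsv
    rw [hy, hlast']
    have : (invL x).2 = ! x.2 := rfl
    simp only [this, List.head?_cons]
    cases hx : x.2 <;> cases hy2 : ((x :: t).getLast (by simp)).2 <;> norm_num [hx, hy2]

end Main

theorem stmt1 {k : ℕ} (hk : 2 ≤ k) (u : List (Letter k)) (hu : IsOriented u)
    (g : FreeGroup (Fin k)) :
    tau u g + tau u g⁻¹ = 0 := by
  obtain ⟨hnd, hmem⟩ := hu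
  have htw : (g⁻¹).toWord = FreeGroup.invRev g.toWord := FreeGroup.toWord_inv g
  unfold tau
  rw [htw]
  have hc : ∀ a : Fin k, cnt g.toWord (a, true) (a, false) = 0 := fun a =>
    cnt_toWord_cancel g (a, true)
  have hc' : ∀ a : Fin k, cnt g.toWord (a, false) (a, true) = 0 := fun a =>
    cnt_toWord_cancel g (a, false)
  have ha := alpha_pair hnd hmem g.toWord hc hc'
  have hb := betaW_invRev u g.toWord
  have ho := omega_pair g.toWord
  have ht := tele (k := k) g.toWord
  linarith
end

section
/- Let u be an oriented word of rank k ≥ 2. For every reduced group word g = x_1 x_2 ... x_n of rank k, τ_u(g) = Σ_{i=1}^{n−1} wtc_u(x_i x_{i+1}) + ω(g), where wtc_u is the weight contribution function. -/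
open FreeGroup

lemma sum_map_eq_sum_count {α : Type*} [Fintype α] [DecidableEq α] [BEq α] [LawfulBEq α] (f : α → ℝ)
    (P : List α) : (P.map f).sum = ∑ a : α, (P.count a : ℝ) * f a := by
  induction P with
  | nil => simp
  | cons q P ih =>
    simp only [List.map_cons, List.sum_cons, ih, List.count_cons, beq_iff_eq]
    have : ∀ a : α, (((P.count a + if q = a then 1 else 0 : ℕ) : ℝ)) * f a
        = (P.count a : ℝ) * f a + (if q = a then f a else 0) := by
      intro a; by_cases h : q = a <;> simp [h] <;> ring
    rw [Finset.sum_congr rfl fun a _ => this a, Finset.sum_add_distrib,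
      Finset.sum_ite_eq Finset.univ q f]
    simp [add_comm]

lemma alpha_beta_eq_sum {k : ℕ} (u L : List (Letter k)) :
    alphaW u L + betaW u L
      = ∑ x : Letter k, ∑ y : Letter k, (cnt L x y : ℝ) * wtc u x y := by
  have hswapA : (∑ a : Fin k, ∑ b : Fin k,
      if leftOf u (a, true) (b, true) then (cnt L (b, false) (a, true) : ℝ) else 0)
      = ∑ a : Fin k, ∑ b : Fin k,
      if leftOf u (b, true) (a, true) then (cnt L (a, false) (b, true) : ℝ) else 0 :=
    Finset.sum_comm
  have hswapB : (∑ a : Fin k, ∑ b : Fin k,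
      if leftOf u (a, false) (b, true) then (cnt L (b, false) (a, false) : ℝ) else 0)
      = ∑ a : Fin k, ∑ b : Fin k,
      if leftOf u (b, false) (a, true) then (cnt L (a, false) (b, false) : ℝ) else 0 :=
    Finset.sum_comm
  have hS : (∑ x : Letter k, ∑ y : Letter k, (cnt L x y : ℝ) * wtc u x y)
      = ∑ a : Fin k, ∑ b : Fin k, ∑ s : Bool, ∑ t : Bool,
        (cnt L (a, s) (b, t) : ℝ) * wtc u (a, s) (b, t) := by
    rw [Fintype.sum_prod_type]
    refine Finset.sum_congr rfl fun a _ => ?_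
    rw [show (∑ s : Bool, ∑ y : Letter k, (cnt L (a, s) y : ℝ) * wtc u (a, s) y)
        = ∑ s : Bool, ∑ b : Fin k, ∑ t : Bool,
          (cnt L (a, s) (b, t) : ℝ) * wtc u (a, s) (b, t) from
      Finset.sum_congr rfl fun s _ => Fintype.sum_prod_type _]
    exact Finset.sum_comm
  rw [hS]
  unfold alphaW betaW
  rw [hswapA, hswapB]
  rw [show ∀ A1 A2 B1 B2 : ℝ, A1 - A2 + (B1 - B2) = A1 + B1 + (-A2 + -B2) from
    fun _ _ _ _ => by ring]
  simp only [← Finset.sum_add_distrib, ← Finset.sum_neg_distrib]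
  refine Finset.sum_congr rfl fun a _ => Finset.sum_congr rfl fun b _ => ?_
  simp only [Fintype.sum_bool, wtc]
  by_cases h1 : leftOf u (a, false) (b, false) <;>
    by_cases h2 : leftOf u (b, true) (a, true) <;>
    by_cases h3 : leftOf u (a, false) (b, true) <;>
    by_cases h4 : leftOf u (b, false) (a, true) <;>
    simp [h1, h2, h3, h4] <;> ring

theorem stmt2 {k : ℕ} (hk : 2 ≤ k) (u : List (Letter k)) (hu : IsOriented u)
    (g : FreeGroup (Fin k)) :
    tau u g
      = ((g.toWord.zip g.toWord.tail).map fun p => wtc u p.1 p.2).sum + omegaW g.toWord := by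
  unfold tau
  congr 1
  rw [sum_map_eq_sum_count, alpha_beta_eq_sum u g.toWord]
  simp [Fintype.sum_prod_type, cnt]
end

section
/- Let G be a group and τ : G → ℝ a function with small relative defect. Then for every g ≠ e, τ(g) and τ(g^{-1}) have opposite signs; the set P = {g ∈ G : τ(g) > 0} satisfies G = P^{-1} ⊔ {e} ⊔ P (disjoint union) and is closed under multiplication. Consequently P is the positive cone of a left order on G, so G is left-orderable. -/
open FreeGroup

theorem stmt8 {G : Type*} [Group G] (τ : G → ℝ) (hτ : SmallRelDefect τ) :
    (∀ g : G, g ≠ 1 → ((0 < τ g ∧ τ g⁻¹ < 0) ∨ (τ g < 0 ∧ 0 < τ g⁻¹)))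
    ∧ (∀ g h : G, 0 < τ g → 0 < τ h → 0 < τ (g * h))
    ∧ (∀ g : G,
        (0 < τ g ∧ g ≠ 1 ∧ ¬ 0 < τ g⁻¹)
        ∨ (g = 1 ∧ τ g = 0 ∧ τ g⁻¹ = 0)
        ∨ (0 < τ g⁻¹ ∧ g ≠ 1 ∧ ¬ 0 < τ g))
    ∧ ∃ r : G → G → Prop, IsLinearOrder G r
        ∧ (∀ a b c : G, r b c → r (a * b) (a * c))
        ∧ ∀ g : G, (r 1 g ∧ g ≠ 1) ↔ 0 < τ g := by
  obtain ⟨h1, hd⟩ := hτ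
  -- opposite signs
  have opp : ∀ g : G, g ≠ 1 → ((0 < τ g ∧ τ g⁻¹ < 0) ∨ (τ g < 0 ∧ 0 < τ g⁻¹)) := by
    intro g hg
    have := hd g g⁻¹ (Or.inl hg)
    rw [mul_inv_cancel, h1] at this
    rcases abs_cases (τ g) with ⟨ha, _⟩ | ⟨ha, _⟩ <;>
      rcases abs_cases (τ g⁻¹) with ⟨hb, _⟩ | ⟨hb, _⟩ <;>
      rcases abs_cases (τ g + τ g⁻¹ - 0) with ⟨hc, _⟩ | ⟨hc, _⟩ <;>
      [skip; skip; skip; skip; skip; skip; skip; skip] <;>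
      first
        | (left; constructor <;> linarith)
        | (right; constructor <;> linarith)
  -- positivity closed under multiplication
  have mulpos : ∀ g h : G, 0 < τ g → 0 < τ h → 0 < τ (g * h) := by
    intro g h hg hh
    have hg1 : g ≠ 1 := by intro e; rw [e, h1] at hg; exact lt_irrefl _ hg
    have := hd g h (Or.inl hg1)
    rw [abs_of_pos hg, abs_of_pos hh] at this
    rcases abs_cases (τ g + τ h - τ (g * h)) with ⟨hc, _⟩ | ⟨hc, _⟩ <;> linarith
  refine ⟨opp, mulpos, ?_, ?_⟩
  · intro g
    by_cases hg : g = 1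
    · exact Or.inr (Or.inl ⟨hg, by rw [hg, h1], by rw [hg, inv_one, h1]⟩)
    · rcases opp g hg with ⟨h2, h3⟩ | ⟨h2, h3⟩
      · exact Or.inl ⟨h2, hg, by linarith⟩
      · exact Or.inr (Or.inr ⟨h3, hg, by linarith⟩)
  · refine ⟨fun g h => g = h ∨ 0 < τ (g⁻¹ * h), ?_, ?_, ?_⟩
    · refine { refl := fun a => Or.inl rfl, trans := ?_, antisymm := ?_, total := ?_ }
      · rintro a b c (rfl | hab) (rfl | hbc)
        · exact Or.inl rfl
        · exact Or.inr hbc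
        · exact Or.inr hab
        · refine Or.inr ?_
          have := mulpos _ _ hab hbc
          rwa [show a⁻¹ * b * (b⁻¹ * c) = a⁻¹ * c by group] at this
      · rintro a b (rfl | hab) (hba' | hba)
        · rfl
        · rfl
        · exact hba'.symm
        · exfalso
          have hne : a⁻¹ * b ≠ 1 := by
            intro e; rw [e, h1] at hab; exact lt_irrefl _ hab
          have h4 : τ ((a⁻¹ * b)⁻¹) = τ (b⁻¹ * a) := by rw [mul_inv_rev, inv_inv]
          rcases opp _ hne with ⟨_, h3⟩ | ⟨h2, _⟩
          · rw [h4] at h3; linarith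
          · linarith
      · intro a b
        by_cases hab : a = b
        · exact Or.inl (Or.inl hab)
        · have hne : a⁻¹ * b ≠ 1 := by
            intro e
            exact hab (by rw [← mul_left_cancel_iff (a := a⁻¹), inv_mul_cancel, ← e])
          rcases opp _ hne with ⟨h2, _⟩ | ⟨_, h3⟩
          · exact Or.inl (Or.inr h2)
          · refine Or.inr (Or.inr ?_)
            rwa [mul_inv_rev, inv_inv] at h3
    · rintro a b c (rfl | hbc)
      · exact Or.inl rfl
      · refine Or.inr ?_
        rwa [mul_inv_rev, mul_assoc, ← mul_assoc a⁻¹, inv_mul_cancel, one_mul]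
    · intro g
      constructor
      · rintro ⟨(rfl | hg), hne⟩
        · exact absurd rfl hne
        · rwa [inv_one, one_mul] at hg
      · intro hg
        have hne : g ≠ 1 := by intro e; rw [e, h1] at hg; exact lt_irrefl _ hg
        exact ⟨Or.inr (by rwa [inv_one, one_mul]), hne⟩
end

section
/- For every oriented word u of rank k ≥ 2, the set P_u = {g ∈ F_k : τ_u(g) > 0} is the positive cone of a left order on F_k: P_u is closed under multiplication, and F_k is the disjoint union of P_u^{-1}, {e}, and P_u. -/
open FreeGroup

namespace Stmt9Aux

variable {k : ℕ}

noncomputable def fL (z : Letter k) : ℝ := if z.2 then 1 else 0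

noncomputable def ol (z : Letter k) : ℝ := if z.2 then 1/2 else -(1/2)

lemma ol_eq (z : Letter k) : ol z = fL z - 1/2 := by
  simp only [ol, fL]; split_ifs <;> norm_num

lemma ol_inv (z : Letter k) : ol (invL z) = - ol z := by
  obtain ⟨a, s⟩ := z; cases s <;> simp [ol, invL]

/-- Reduced word predicate. -/
def Red' (L : List (Letter k)) : Prop := List.Chain' (fun a b => b ≠ invL a) L

lemma lo_trans {u : List (Letter k)} {x y z : Letter k} (h1 : leftOf u x y)
    (h2 : leftOf u y z) : leftOf u x z := Nat.lt_trans h1 h2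

lemma lo_asymm {u : List (Letter k)} {x y : Letter k} (h1 : leftOf u x y) :
    ¬ leftOf u y x := Nat.lt_asymm h1

lemma indexOf_inj' : ∀ {l : List (Letter k)} {x y : Letter k}, x ∈ l →
    l.idxOf x = l.idxOf y → x = y := by
  intro l
  induction l with
  | nil => intro x y hx; simp at hx
  | cons a t ih =>
    intro x y hx h
    rw [List.idxOf_cons, List.idxOf_cons, Bool.cond_eq_ite, Bool.cond_eq_ite] at h
    simp only [beq_iff_eq] at h
    by_cases h1 : a = x
    · by_cases h2 : a = y
      · exact h1.symm.trans h2
      · rw [if_pos h1, if_neg h2] at h; omega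
    · by_cases h2 : a = y
      · rw [if_neg h1, if_pos h2] at h; omega
      · rw [if_neg h1, if_neg h2] at h
        have hx' : x ∈ t := by
          rcases List.mem_cons.1 hx with e | e
          · exact absurd e.symm h1
          · exact e
        exact ih hx' (by omega)

lemma lo_total {u : List (Letter k)} (hu : IsOriented u) {x y : Letter k} (h : x ≠ y) :
    leftOf u x y ∨ leftOf u y x := by
  rcases Nat.lt_trichotomy (u.idxOf x) (u.idxOf y) with h1 | h1 | h1
  · exact Or.inl h1
  · exact absurd (indexOf_inj' (hu.2 x) h1) h
  · exact Or.inr h1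

lemma wtc_le (u : List (Letter k)) (x y : Letter k) : wtc u x y ≤ fL x := by
  simp only [wtc, fL]; split_ifs <;> norm_num

lemma wtc_ge (u : List (Letter k)) (x y : Letter k) : fL x - 1 ≤ wtc u x y := by
  simp only [wtc, fL]; split_ifs <;> norm_num

lemma wtc_inv {u : List (Letter k)} (hu : IsOriented u) {x y : Letter k}
    (h : y ≠ invL x) : wtc u x y + wtc u (invL y) (invL x) = fL x - fL y := by
  obtain ⟨a, sa⟩ := x
  obtain ⟨b, sb⟩ := y
  have hba : sb = !sa → b ≠ a := by
    intro e hb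
    exact h (by simp [invL, e, hb])
  cases sa <;> cases sb
  · -- (a,false),(b,false)
    simp only [wtc, invL, fL]
    norm_num
    split_ifs <;> norm_num
  · -- x=(a,false), y=(b,true) : target -1
    have hb : b ≠ a := hba rfl
    have hne : ((b, true) : Letter k) ≠ (a, true) := by simp [hb]
    simp only [wtc, invL, fL]
    norm_num
    rcases lo_total hu hne with h1 | h1
    · rw [if_pos h1, if_neg (lo_asymm h1)]; norm_num
    · rw [if_neg (lo_asymm h1), if_pos h1]; norm_num
  · -- x=(a,true), y=(b,false) : target 1
    have hb : b ≠ a := hba rfl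
    have hne : ((a, false) : Letter k) ≠ (b, false) := by simp [Ne.symm hb]
    simp only [wtc, invL, fL]
    norm_num
    rcases lo_total hu hne with h1 | h1
    · rw [if_pos h1, if_neg (lo_asymm h1)]; norm_num
    · rw [if_neg (lo_asymm h1), if_pos h1]; norm_num
  · -- (a,true),(b,true)
    simp only [wtc, invL, fL]
    norm_num
    split_ifs <;> norm_num

end Stmt9Aux

namespace Stmt9Aux

variable {k : ℕ}

noncomputable def Sw (u : List (Letter k)) : List (Letter k) → ℝ
  | [] => 0
  | [_] => 0
  | x :: y :: t => wtc u x y + Sw u (y :: t)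

lemma Sw_nil (u : List (Letter k)) : Sw u [] = 0 := rfl

lemma Sw_single (u : List (Letter k)) (x : Letter k) : Sw u [x] = 0 := rfl

lemma Sw_cons_cons (u : List (Letter k)) (x y : Letter k) (t : List (Letter k)) :
    Sw u (x :: y :: t) = wtc u x y + Sw u (y :: t) := rfl

lemma omegaW_nil : omegaW ([] : List (Letter k)) = 0 := rfl

lemma omegaW_eq {L : List (Letter k)} (h : L ≠ []) : omegaW L = ol (L.getLast h) := by
  rw [omegaW, List.getLast?_eq_getLast_of_ne_nil h]
  rfl

lemma omegaW_append {L1 L2 : List (Letter k)} (h : L2 ≠ []) :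
    omegaW (L1 ++ L2) = omegaW L2 := by
  have e : (L1 ++ L2).getLast? = L2.getLast? := List.getLast?_append_of_ne_nil _ h
  rw [omegaW, omegaW, e]

lemma omegaW_concat (L : List (Letter k)) (z : Letter k) : omegaW (L ++ [z]) = ol z := by
  rw [omegaW_append (by simp), omegaW_eq (by simp : ([z] : List (Letter k)) ≠ [])]
  rfl

lemma Sw_append (u : List (Letter k)) :
    ∀ (L1 : List (Letter k)) (h1 : L1 ≠ []) (L2 : List (Letter k)) (h2 : L2 ≠ []),
      Sw u (L1 ++ L2) = Sw u L1 + wtc u (L1.getLast h1) (L2.head h2) + Sw u L2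
  | [], h1, _, _ => absurd rfl h1
  | [x], _, [], h2 => absurd rfl h2
  | [x], _, y :: t, _ => by
      simp only [List.singleton_append, Sw_cons_cons, Sw_single, List.getLast_singleton,
        List.head_cons]
      ring
  | x :: x2 :: t, _, L2, h2 => by
      have ih := Sw_append u (x2 :: t) (List.cons_ne_nil _ _) L2 h2
      have e1 : (x :: x2 :: t) ++ L2 = x :: ((x2 :: t) ++ L2) := rfl
      have e2 : (x2 :: t) ++ L2 = x2 :: (t ++ L2) := rfl
      rw [e1, e2, Sw_cons_cons, ← e2, ih, Sw_cons_cons,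
        List.getLast_cons (List.cons_ne_nil _ _)]
      ring

noncomputable def Tw (u L : List (Letter k)) : ℝ := Sw u L + omegaW L

lemma Tw_nil (u : List (Letter k)) : Tw u [] = 0 := by
  rw [Tw, Sw_nil, omegaW_nil]; ring

lemma invWord_nil : invWord ([] : List (Letter k)) = [] := rfl

lemma invWord_cons (x : Letter k) (t : List (Letter k)) :
    invWord (x :: t) = invWord t ++ [invL x] := by
  simp [invWord]

lemma invWord_ne_nil {L : List (Letter k)} (h : L ≠ []) : invWord L ≠ [] := by
  cases L with
  | nil => exact absurd rfl h
  | cons x t => rw [invWord_cons]; simp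

lemma invWord_getLast {L : List (Letter k)} (h : L ≠ []) :
    (invWord L).getLast (invWord_ne_nil h) = invL (L.head h) := by
  cases L with
  | nil => exact absurd rfl h
  | cons x t =>
      simp only [List.head_cons]
      have : invWord (x :: t) = invWord t ++ [invL x] := invWord_cons x t
      rw [List.getLast_congr _ _ this]
      · simp [List.getLast_append]
      · simp

lemma Tw_inv {u : List (Letter k)} (hu : IsOriented u) :
    ∀ L : List (Letter k), Red' L → Tw u (invWord L) = - Tw u L
  | [], _ => by rw [invWord_nil, Tw_nil]; ring
  | [x], _ => by
      rw [show invWord [x] = [invL x] from rfl, Tw, Tw, Sw_single, Sw_single,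
        omegaW_eq (by simp : ([invL x] : List (Letter k)) ≠ []),
        omegaW_eq (by simp : ([x] : List (Letter k)) ≠ [])]
      simp [ol_inv]
  | x :: y :: t, hr => by
      have hyx : y ≠ invL x := (List.isChain_cons_cons.1 hr).1
      have hr' : Red' (y :: t) := (List.isChain_cons_cons.1 hr).2
      have ih := Tw_inv hu (y :: t) hr'
      have hA : invWord (y :: t) ≠ [] := invWord_ne_nil (by simp)
      have e : invWord (x :: y :: t) = invWord (y :: t) ++ [invL x] := invWord_cons _ _
      have hSa : Sw u (invWord (x :: y :: t))
          = Sw u (invWord (y :: t)) + wtc u (invL y) (invL x) := by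
        rw [e, Sw_append u _ hA [invL x] (by simp), Sw_single,
          invWord_getLast (by simp : (y :: t : List (Letter k)) ≠ [])]
        simp only [List.head_cons, List.head_cons]
        ring
      have hOa : omegaW (invWord (x :: y :: t)) = - ol x := by
        rw [e, omegaW_concat, ol_inv]
      have hOyt : omegaW (x :: y :: t) = omegaW (y :: t) := by
        rw [show (x :: y :: t : List (Letter k)) = [x] ++ (y :: t) from rfl]
        exact omegaW_append (by simp)
      have key := wtc_inv hu hyx
      have ihe : Sw u (invWord (y :: t)) + omegaW (invWord (y :: t))
          = -(Sw u (y :: t) + omegaW (y :: t)) := ih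
      have hOinv : omegaW (invWord (y :: t)) = - ol y := by
        rw [invWord_cons, omegaW_concat, ol_inv]
      rw [Tw, hSa, hOa, Tw, Sw_cons_cons, hOyt]
      have h1 : Sw u (invWord (y :: t)) = -(Sw u (y :: t) + omegaW (y :: t)) + ol y := by
        linarith [ihe, hOinv]
      rw [h1]
      linarith [key, ol_eq x, ol_eq y]

lemma Sw_invWord {u : List (Letter k)} (hu : IsOriented u) {m : List (Letter k)}
    (h : m ≠ []) (hr : Red' m) :
    Sw u (invWord m) = - Sw u m - ol (m.getLast h) + ol (m.head h) := by
  have := Tw_inv hu m hr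
  rw [Tw, Tw, omegaW_eq (invWord_ne_nil h), invWord_getLast h, ol_inv, omegaW_eq h] at this
  linarith

end Stmt9Aux

namespace Stmt9Aux

variable {k : ℕ}

lemma red'_reduce (L : List (Letter k)) : Red' (FreeGroup.reduce L) := by
  induction L with
  | nil => exact List.isChain_nil
  | cons x t ih =>
    rw [FreeGroup.reduce.cons]
    rcases h : FreeGroup.reduce t with _ | ⟨hd, tl⟩
    · simp [Red', List.Chain']
    · rw [h] at ih
      by_cases hc : x.1 = hd.1 ∧ x.2 = !hd.2
      · simp only [hc, and_self, if_true]
        exact (List.isChain_cons.1 ih).2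
      · simp only [hc, if_false]
        refine List.isChain_cons_cons.2 ⟨?_, ih⟩
        intro e
        rw [e] at hc
        exact hc ⟨rfl, by simp [invL]⟩

lemma reduce_of_red' : ∀ {L : List (Letter k)}, Red' L → FreeGroup.reduce L = L := by
  intro L
  induction L with
  | nil => intro; rfl
  | cons x t ih =>
    intro h
    have ht : Red' t := h.tail
    rw [FreeGroup.reduce.cons, ih ht]
    cases t with
    | nil => rfl
    | cons hd tl =>
      have hne : hd ≠ invL x := (List.isChain_cons_cons.1 h).1
      have hc : ¬(x.1 = hd.1 ∧ x.2 = !hd.2) := by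
        rintro ⟨e1, e2⟩
        apply hne
        have : invL x = (x.1, !x.2) := rfl
        rw [this, e1, e2]
        simp
      simp only [hc, if_false]

lemma invWord_eq_invRev (L : List (Letter k)) : invWord L = FreeGroup.invRev L := rfl

/-- Cancellation decomposition of the product of two reduced words. -/
lemma decomp : ∀ (w : List (Letter k)), Red' w → ∀ (v : List (Letter k)), Red' v →
    ∃ p m q : List (Letter k), w = p ++ invWord m ∧ v = m ++ q ∧
      FreeGroup.reduce (w ++ v) = p ++ q ∧ Red' (p ++ q) := by
  intro w
  induction w using List.reverseRecOn with
  | nil =>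
    intro _ v hv
    exact ⟨[], [], v, rfl, rfl, by simpa using reduce_of_red' hv, by simpa using hv⟩
  | append_singleton w' x ih =>
    intro hw v hv
    rcases v with _ | ⟨y, v'⟩
    · exact ⟨w' ++ [x], [], [], by simp [invWord], rfl, by simpa using reduce_of_red' hw,
        by simpa using hw⟩
    · by_cases hy : y = invL x
      · -- cancellation
        have hw' : Red' w' := hw.prefix (List.prefix_append w' [x])
        have hv' : Red' v' := hv.tail
        obtain ⟨p, m, q, e1, e2, e3, e4⟩ := ih hw' v' hv'
        refine ⟨p, y :: m, q, ?_, by simpa using e2, ?_, e4⟩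
        · rw [invWord_cons, hy]
          have : invL (invL x) = x := by
            obtain ⟨a, s⟩ := x; cases s <;> rfl
          rw [this, e1, List.append_assoc]
        · have step : FreeGroup.Red.Step ((w' ++ [x]) ++ y :: v') (w' ++ v') := by
            have e : (w' ++ [x]) ++ y :: v' = w' ++ (x.1, x.2) :: (x.1, !x.2) :: v' := by
              rw [hy]
              simp [invL]
            rw [e]
            exact FreeGroup.Red.Step.not
          rw [FreeGroup.reduce.Step.eq step, e3]
      · -- no cancellation
        have hred : Red' ((w' ++ [x]) ++ y :: v') := by
          apply List.IsChain.append hw hv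
          intro a ha b hb
          rw [List.getLast?_concat] at ha
          simp only [List.head?_cons, Option.mem_some_iff] at ha hb
          rw [← ha, ← hb]
          exact hy
        exact ⟨w' ++ [x], [], y :: v', by simp [invWord], rfl,
          by simpa using reduce_of_red' hred, hred⟩

end Stmt9Aux

namespace Stmt9Aux

variable {k : ℕ}

lemma sum_count_mul (l : List (Letter k × Letter k)) (f : Letter k × Letter k → ℝ) :
    ∑ v : Letter k × Letter k, (l.count v : ℝ) * f v = (l.map f).sum := by
  induction l with
  | nil => simp
  | cons a t ih =>
    have h : ∑ v : Letter k × Letter k, ((a :: t).count v : ℝ) * f v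
        = ∑ v : Letter k × Letter k, ((t.count v : ℝ) * f v + (if v = a then f v else 0)) := by
      apply Finset.sum_congr rfl
      intro v _
      rw [List.count_cons]
      by_cases hv : v = a
      · simp [hv]
        push_cast
        ring
      · have hv' : ¬ a = v := fun e => hv e.symm
        simp [hv]
        exact Or.inl hv'
    rw [List.map_cons, List.sum_cons, h, Finset.sum_add_distrib, ih,
      Finset.sum_ite_eq' Finset.univ a f]
    simp [add_comm]

lemma zip_sum_eq (u : List (Letter k)) : ∀ L : List (Letter k),
    ((L.zip L.tail).map (fun p => wtc u p.1 p.2)).sum = Sw u L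
  | [] => rfl
  | [_] => rfl
  | x :: y :: t => by
      have ih := zip_sum_eq u (y :: t)
      simp only [List.tail_cons, List.zip_cons_cons, List.map_cons, List.sum_cons] at *
      rw [Sw_cons_cons, ← ih]

lemma ite_neg' (c : Prop) [Decidable c] (t : ℝ) :
    (if c then -t else 0) = -(if c then t else 0) := by split_ifs <;> simp

lemma alpha_beta (u L : List (Letter k)) : alphaW u L + betaW u L = Sw u L := by
  have h1 : ∑ v : Letter k × Letter k, (((L.zip L.tail).count v : ℝ)) * wtc u v.1 v.2
      = Sw u L := (sum_count_mul _ _).trans (zip_sum_eq u L)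
  rw [← h1]
  unfold alphaW betaW cnt
  simp only [Fintype.sum_prod_type, Fintype.sum_bool, wtc, mul_ite, mul_one, mul_zero,
    mul_neg, if_true, if_false, Bool.false_eq_true, ite_true, ite_false, ite_neg',
    Finset.sum_neg_distrib, Finset.sum_add_distrib]
  have hA2 : (∑ a : Fin k, ∑ b : Fin k,
        if leftOf u (a, true) (b, true) then (((L.zip L.tail).count ((b, false), (a, true)) : ℕ) : ℝ) else 0)
      = ∑ a : Fin k, ∑ b : Fin k,
        if leftOf u (b, true) (a, true) then (((L.zip L.tail).count ((a, false), (b, true)) : ℕ) : ℝ) else 0 :=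
    Finset.sum_comm
  have hB2 : (∑ a : Fin k, ∑ b : Fin k,
        if leftOf u (a, false) (b, true) then (((L.zip L.tail).count ((b, false), (a, false)) : ℕ) : ℝ) else 0)
      = ∑ a : Fin k, ∑ b : Fin k,
        if leftOf u (b, false) (a, true) then (((L.zip L.tail).count ((a, false), (b, false)) : ℕ) : ℝ) else 0 :=
    Finset.sum_comm
  rw [hA2, hB2]
  ring

end Stmt9Aux

namespace Stmt9Aux

variable {k : ℕ}

lemma core_ineq {u : List (Letter k)} (hu : IsOriented u) {x d y : Letter k}
    (hy : y ≠ invL d) : wtc u x (invL d) + wtc u d y ≤ wtc u x y + fL d := by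
  obtain ⟨a, sd⟩ := d
  obtain ⟨b, sx⟩ := x
  cases sd <;> cases sx <;>
    (simp only [wtc, invL, fL] at hy ⊢; norm_num; split_ifs with h1 h2 h3 <;> norm_num)
  · exfalso
    rename_i hB hC
    rcases lo_total hu (show y ≠ ((a, true) : Letter k) by simpa using hy) with h | h
    · exact hB h
    · exact h1 (lo_trans h hC)
  · exfalso
    rename_i hC
    rcases lo_total hu (show y ≠ ((a, true) : Letter k) by simpa using hy) with h | h
    · exact h2 h
    · exact hC (lo_trans h1 h)
  · exfalso
    rename_i hB hC
    exact h1 (lo_trans hB hC)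
  · exact absurd (lo_trans h1 h2) h3

end Stmt9Aux

namespace Stmt9Aux

variable {k : ℕ}

lemma invWord_head {L : List (Letter k)} (h : L ≠ []) :
    (invWord L).head (invWord_ne_nil h) = invL (L.getLast h) := by
  induction L using List.reverseRecOn with
  | nil => exact absurd rfl h
  | append_singleton A d _ =>
    have e : invWord (A ++ [d]) = invL d :: invWord A := by simp [invWord]
    have h1 : (invWord (A ++ [d])).head? = some (invL d) := by rw [e]; rfl
    rw [List.head?_eq_head (invWord_ne_nil h)] at h1
    have h3 : (A ++ [d]).getLast h = d := by simp [List.getLast_append]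
    rw [h3]
    exact Option.some.inj h1

lemma red'_junction {l1 l2 : List (Letter k)} (h : Red' (l1 ++ l2)) (h1 : l1 ≠ [])
    (h2 : l2 ≠ []) : l2.head h2 ≠ invL (l1.getLast h1) := by
  rw [Red', List.Chain', List.isChain_append] at h
  exact h.2.2 _ (List.getLast?_eq_getLast (l := l1) h1) _ (List.head?_eq_head h2)

lemma Tw_append (u : List (Letter k)) {p q : List (Letter k)} (hp : p ≠ []) (hq : q ≠ []) :
    Tw u (p ++ q) = Sw u p + wtc u (p.getLast hp) (q.head hq) + Sw u q + omegaW q := by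
  rw [Tw, Sw_append u p hp q hq, omegaW_append hq]

lemma Tw_eq (u : List (Letter k)) {p : List (Letter k)} (hp : p ≠ []) :
    Tw u p = Sw u p + ol (p.getLast hp) := by
  rw [Tw, omegaW_eq hp]

lemma main_bound {u : List (Letter k)} (hu : IsOriented u) {w v : List (Letter k)}
    (hw : Red' w) (hv : Red' v) :
    Tw u w + Tw u v ≤ Tw u (FreeGroup.reduce (w ++ v)) + 1/2 := by
  obtain ⟨p, m, q, e1, e2, e3, e4⟩ := decomp w hw v hv
  rw [e3]
  have hm : Red' m := hv.prefix ⟨q, e2.symm⟩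
  subst e1; subst e2
  by_cases hmn : m = []
  · subst hmn
    simp only [show invWord ([] : List (Letter k)) = [] from rfl, List.append_nil,
      List.nil_append] at hw ⊢
    by_cases hpn : p = []
    · subst hpn
      simp only [List.nil_append, Tw_nil]
      linarith
    · by_cases hqn : q = []
      · subst hqn
        simp only [List.append_nil, Tw_nil]
        linarith
      · rw [Tw_append u hpn hqn, Tw_eq u hpn, Tw]
        have h1 := wtc_ge u (p.getLast hpn) (q.head hqn)
        have h2 := ol_eq (p.getLast hpn)
        linarith
  · have hTm : Tw u (invWord m) = - Tw u m := Tw_inv hu m hm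
    have hTme : Tw u m = Sw u m + ol (m.getLast hmn) := Tw_eq u hmn
    have hsum : Sw u (invWord m) + omegaW (invWord m) = -(Sw u m + ol (m.getLast hmn)) := by
      rw [← Tw, hTm, hTme]
    by_cases hpn : p = []
    · subst hpn
      simp only [List.nil_append] at hv ⊢
      by_cases hqn : q = []
      · subst hqn
        simp only [List.append_nil] at hv ⊢
        rw [Tw_nil, hTm]
        linarith
      · rw [Tw_append u hmn hqn, hTm, hTme, Tw]
        have h1 := wtc_le u (m.getLast hmn) (q.head hqn)
        have h2 := ol_eq (m.getLast hmn)
        linarith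
    · by_cases hqn : q = []
      · subst hqn
        simp only [List.append_nil] at e4 ⊢
        rw [Tw_append u hpn (invWord_ne_nil hmn), invWord_head hmn, hTme, Tw_eq u hpn]
        have h1 := wtc_le u (p.getLast hpn) (invL (m.getLast hmn))
        have h2 := ol_eq (p.getLast hpn)
        linarith
      · have hy : q.head hqn ≠ invL (m.getLast hmn) := red'_junction hv hmn hqn
        rw [Tw_append u hpn (invWord_ne_nil hmn), invWord_head hmn,
          Tw_append u hmn hqn, Tw_append u hpn hqn]
        have hcore := core_ineq hu (x := p.getLast hpn) hy
        have h2 := ol_eq (m.getLast hmn)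
        linarith

end Stmt9Aux

namespace Stmt9Aux

variable {k : ℕ}

lemma wtc_int (u : List (Letter k)) (x y : Letter k) : ∃ z : ℤ, wtc u x y = z := by
  rw [wtc]; split_ifs
  exacts [⟨1, by norm_num⟩, ⟨0, by norm_num⟩, ⟨-1, by norm_num⟩, ⟨0, by norm_num⟩]

lemma Sw_int (u : List (Letter k)) : ∀ L, ∃ z : ℤ, Sw u L = z
  | [] => ⟨0, by simp [Sw_nil]⟩
  | [x] => ⟨0, by simp [Sw_single]⟩
  | x :: y :: t => by
    obtain ⟨z1, h1⟩ := wtc_int u x y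
    obtain ⟨z2, h2⟩ := Sw_int u (y :: t)
    exact ⟨z1 + z2, by rw [Sw_cons_cons, h1, h2]; push_cast; ring⟩

lemma tau_Tw (u : List (Letter k)) (g : FreeGroup (Fin k)) : tau u g = Tw u g.toWord := by
  rw [tau, Tw, ← alpha_beta]

lemma red'_toWord (g : FreeGroup (Fin k)) : Red' g.toWord := by
  rw [← FreeGroup.reduce_toWord g]; exact red'_reduce _

lemma tau_one (u : List (Letter k)) : tau u (1 : FreeGroup (Fin k)) = 0 := by
  rw [tau_Tw, FreeGroup.toWord_one, Tw_nil]

lemma tau_inv {u : List (Letter k)} (hu : IsOriented u) (g : FreeGroup (Fin k)) :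
    tau u g⁻¹ = - tau u g := by
  rw [tau_Tw, tau_Tw, FreeGroup.toWord_inv, ← invWord_eq_invRev, Tw_inv hu _ (red'_toWord g)]

lemma tau_half {u : List (Letter k)} (g : FreeGroup (Fin k)) (hg : g ≠ 1)
    (hp : 0 < tau u g) : 1/2 ≤ tau u g := by
  have hL : g.toWord ≠ [] := fun e => hg (FreeGroup.toWord_eq_nil_iff.1 e)
  rw [tau_Tw, Tw, omegaW_eq hL] at hp ⊢
  obtain ⟨z, hz⟩ := Sw_int u g.toWord
  rw [hz, ol] at hp ⊢
  split_ifs at hp ⊢ with hcond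
  · have h0 : (0 : ℤ) ≤ z := by
      by_contra hneg
      push_neg at hneg
      have : (z : ℝ) ≤ -1 := by exact_mod_cast Int.le_sub_one_of_lt hneg
      linarith
    have : (0 : ℝ) ≤ z := by exact_mod_cast h0
    linarith
  · have h0 : (1 : ℤ) ≤ z := by
      by_contra hneg
      push_neg at hneg
      have : (z : ℝ) ≤ 0 := by exact_mod_cast Int.le_sub_one_of_lt hneg
      linarith
    have : (1 : ℝ) ≤ z := by exact_mod_cast h0
    linarith

lemma tau_ne {u : List (Letter k)} (g : FreeGroup (Fin k)) (hg : g ≠ 1) :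
    tau u g ≠ 0 := by
  have hL : g.toWord ≠ [] := fun e => hg (FreeGroup.toWord_eq_nil_iff.1 e)
  rw [tau_Tw, Tw, omegaW_eq hL]
  obtain ⟨z, hz⟩ := Sw_int u g.toWord
  rw [hz, ol]
  split_ifs
  · intro h0
    have h1 : ((2 * z + 1 : ℤ) : ℝ) = 0 := by push_cast; linarith
    have h2 : (2 * z + 1 : ℤ) = 0 := by exact_mod_cast h1
    omega
  · intro h0
    have h1 : ((2 * z - 1 : ℤ) : ℝ) = 0 := by push_cast; linarith
    have h2 : (2 * z - 1 : ℤ) = 0 := by exact_mod_cast h1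
    omega

lemma toWord_mul' (g h : FreeGroup (Fin k)) :
    (g * h).toWord = FreeGroup.reduce (g.toWord ++ h.toWord) := by
  have e : g * h = FreeGroup.mk (g.toWord ++ h.toWord) := by
    rw [← FreeGroup.mul_mk, FreeGroup.mk_toWord, FreeGroup.mk_toWord]
  rw [e, FreeGroup.toWord_mk]

end Stmt9Aux

open Stmt9Aux in
theorem stmt9 {k : ℕ} (hk : 2 ≤ k) (u : List (Letter k)) (hu : IsOriented u) :
    (∀ g h : FreeGroup (Fin k), 0 < tau u g → 0 < tau u h → 0 < tau u (g * h))
    ∧ ∀ g : FreeGroup (Fin k),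
        (0 < tau u g ∧ g ≠ 1 ∧ ¬ 0 < tau u g⁻¹)
        ∨ (g = 1 ∧ ¬ 0 < tau u g ∧ ¬ 0 < tau u g⁻¹)
        ∨ (0 < tau u g⁻¹ ∧ g ≠ 1 ∧ ¬ 0 < tau u g) := by
  constructor
  · intro g h hg hh
    have hg1 : g ≠ 1 := fun e => by rw [e, tau_one] at hg; exact lt_irrefl _ hg
    have hh1 : h ≠ 1 := fun e => by rw [e, tau_one] at hh; exact lt_irrefl _ hh
    have h1 := tau_half g hg1 hg
    have h2 := tau_half h hh1 hh
    have hb := main_bound hu (red'_toWord g) (red'_toWord h)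
    rw [tau_Tw u (g * h), toWord_mul']
    rw [tau_Tw u g] at h1
    rw [tau_Tw u h] at h2
    linarith
  · intro g
    by_cases hg1 : g = 1
    · subst hg1
      right; left
      rw [inv_one, tau_one]
      exact ⟨rfl, lt_irrefl _, lt_irrefl _⟩
    · rcases lt_or_gt_of_ne (tau_ne g hg1) with hneg | hpos
      · right; right
        refine ⟨?_, hg1, by linarith⟩
        rw [tau_inv hu]
        linarith
      · left
        refine ⟨hpos, hg1, ?_⟩
        rw [tau_inv hu]
        linarith
end

section
/- Let u be an oriented word of rank k ≥ 2 and ≤_u the left order on F_k with positive cone P_u = {g : τ_u(g) > 0}. For distinct indices i, j: a_i <_u a_j if and only if a_i occurs to the left of a_j in u, and a_i^{-1} <_u a_j^{-1} if and only if a_i^{-1} occurs to the left of a_j^{-1} in u. -/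
open FreeGroup

section Aux

set_option maxRecDepth 4000

variable {k : ℕ}

lemma cnt_pair (x y p q : Letter k) :
    cnt [x, y] p q = if x = p ∧ y = q then 1 else 0 := by
  simp only [cnt, List.zip, List.zipWith, List.count_cons, List.count_nil, beq_iff_eq,
    Prod.mk.injEq]
  by_cases h1 : x = p <;> by_cases h2 : y = q <;> simp [h1, h2, Prod.ext_iff]

lemma cnt_pair_ne (x y p q : Letter k) (h : x ≠ p ∨ y ≠ q) :
    cnt [x, y] p q = 0 := by
  rw [cnt_pair]
  rcases h with h | h <;> simp [h]

lemma sum_zero (u : List (Letter k)) (c : Letter k → Letter k → Prop)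
    [∀ x y, Decidable (c x y)] (f : Fin k → Fin k → ℕ) (hf : ∀ a b, f a b = 0) :
    (∑ a : Fin k, ∑ b : Fin k, if c (a, true) (b, true) then (f a b : ℝ) else 0) = 0 := by
  simp [hf]

end Aux

theorem stmt10 {k : ℕ} (hk : 2 ≤ k) (u : List (Letter k)) (hu : IsOriented u)
    (i j : Fin k) (hij : i ≠ j) :
    (0 < tau u ((FreeGroup.of i)⁻¹ * FreeGroup.of j) ↔ leftOf u (i, true) (j, true))
    ∧ (0 < tau u (FreeGroup.of i * (FreeGroup.of j)⁻¹) ↔ leftOf u (i, false) (j, false)) := by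
  obtain ⟨hnd, hmem⟩ := hu
  have hbeq : (@instBEqProd (Fin k) Bool _ _ : BEq (Letter k))
      = @instBEqOfDecidableEq (Letter k) (inferInstanceAs (DecidableEq (Letter k))) :=
    @lawful_beq_subsingleton (Letter k) _ _
      (by infer_instance)
      (@LawfulBEq.mk (Letter k)
        (@instBEqOfDecidableEq (Letter k) (inferInstanceAs (DecidableEq (Letter k))))
        (@ReflBEq.mk (Letter k) (@instBEqOfDecidableEq (Letter k) (inferInstanceAs (DecidableEq (Letter k)))) (fun {a} => decide_eq_true rfl)) (fun h => of_decide_eq_true h))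
  have hidx : ∀ x y : Letter k, x ≠ y → u.idxOf x ≠ u.idxOf y := by
    intro x y hxy h
    rw [hbeq] at h
    exact hxy ((@List.idxOf_inj (Letter k) instBEqOfDecidableEq _ u x y (hmem x)).1 h)
  have hw1 : ((FreeGroup.of i)⁻¹ * FreeGroup.of j).toWord = [(i, false), (j, true)] := by
    have : (FreeGroup.of i)⁻¹ * FreeGroup.of j = FreeGroup.mk [(i, false), (j, true)] := by
      rw [show FreeGroup.of i = FreeGroup.mk [(i, true)] from rfl,
        show FreeGroup.of j = FreeGroup.mk [(j, true)] from rfl, FreeGroup.inv_mk,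
        FreeGroup.mul_mk]
      rfl
    rw [this, FreeGroup.toWord_mk]
    simp [FreeGroup.reduce, hij]
  have hw2 : (FreeGroup.of i * (FreeGroup.of j)⁻¹).toWord = [(i, true), (j, false)] := by
    have : FreeGroup.of i * (FreeGroup.of j)⁻¹ = FreeGroup.mk [(i, true), (j, false)] := by
      rw [show FreeGroup.of i = FreeGroup.mk [(i, true)] from rfl,
        show FreeGroup.of j = FreeGroup.mk [(j, true)] from rfl, FreeGroup.inv_mk,
        FreeGroup.mul_mk]
      rfl
    rw [this, FreeGroup.toWord_mk]
    simp [FreeGroup.reduce, hij]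
  constructor
  · -- first part: reduced word [(i, false), (j, true)]
    have hA : alphaW u [(i, false), (j, true)]
        = -(if leftOf u (j, true) (i, true) then 1 else 0) := by
      unfold alphaW
      have h1 : (∑ a : Fin k, ∑ b : Fin k,
          if leftOf u (a, false) (b, false) then
            (cnt [(i, false), (j, true)] (a, true) (b, false) : ℝ) else 0) = 0 := by
        refine Finset.sum_eq_zero fun a _ => Finset.sum_eq_zero fun b _ => ?_
        rw [cnt_pair_ne _ _ _ _ (Or.inl (by simp))]
        simp
      have h2 : (∑ a : Fin k, ∑ b : Fin k,
          if leftOf u (a, true) (b, true) then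
            (cnt [(i, false), (j, true)] (b, false) (a, true) : ℝ) else 0)
          = if leftOf u (j, true) (i, true) then 1 else 0 := by
        have h : ∀ a b : Fin k, cnt ([(i, false), (j, true)] : List (Letter k)) (b, false)
            (a, true) = if i = b ∧ j = a then 1 else 0 := by
          intro a b
          rw [cnt_pair]
          simp [Prod.ext_iff]
        simp only [h]
        rw [Finset.sum_eq_single j]
        · rw [Finset.sum_eq_single i]
          · simp
          · intro b _ hb; simp [Ne.symm hb]
          · simp
        · intro a _ ha
          refine Finset.sum_eq_zero fun b _ => ?_
          simp [Ne.symm ha]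
        · simp
      rw [h1, h2]; ring
    have hB : betaW u [(i, false), (j, true)] = 0 := by
      unfold betaW
      have h1 : (∑ a : Fin k, ∑ b : Fin k,
          if leftOf u (a, false) (b, true) then
            (cnt [(i, false), (j, true)] (a, true) (b, true) : ℝ) else 0) = 0 := by
        refine Finset.sum_eq_zero fun a _ => Finset.sum_eq_zero fun b _ => ?_
        rw [cnt_pair_ne _ _ _ _ (Or.inl (by simp))]
        simp
      have h2 : (∑ a : Fin k, ∑ b : Fin k,
          if leftOf u (a, false) (b, true) then
            (cnt [(i, false), (j, true)] (b, false) (a, false) : ℝ) else 0) = 0 := by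
        refine Finset.sum_eq_zero fun a _ => Finset.sum_eq_zero fun b _ => ?_
        rw [cnt_pair_ne _ _ _ _ (Or.inr (by simp))]
        simp
      rw [h1, h2]; ring
    have hO : omegaW ([(i, false), (j, true)] : List (Letter k)) = 1 / 2 := by
      simp [omegaW]
    rw [tau, hw1, hA, hB, hO]
    have hne : u.idxOf ((i, true) : Letter k) ≠ u.idxOf ((j, true) : Letter k) :=
      hidx _ _ (by simp [hij])
    by_cases h : leftOf u (j, true) (i, true)
    · simp only [h, if_true]
      constructor
      · intro hpos; linarith
      · intro h'; exact absurd (lt_trans h' h) (lt_irrefl _)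
    · simp only [h, if_false]
      constructor
      · intro _
        exact lt_of_le_of_ne (not_lt.1 h) hne
      · intro _; norm_num
  · -- second part: reduced word [(i, true), (j, false)]
    have hA : alphaW u [(i, true), (j, false)]
        = if leftOf u (i, false) (j, false) then 1 else 0 := by
      unfold alphaW
      have h1 : (∑ a : Fin k, ∑ b : Fin k,
          if leftOf u (a, false) (b, false) then
            (cnt [(i, true), (j, false)] (a, true) (b, false) : ℝ) else 0)
          = if leftOf u (i, false) (j, false) then 1 else 0 := by
        have h : ∀ a b : Fin k, cnt ([(i, true), (j, false)] : List (Letter k)) (a, true)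
            (b, false) = if i = a ∧ j = b then 1 else 0 := by
          intro a b
          rw [cnt_pair]
          simp [Prod.ext_iff]
        simp only [h]
        rw [Finset.sum_eq_single i]
        · rw [Finset.sum_eq_single j]
          · simp
          · intro b _ hb; simp [Ne.symm hb]
          · simp
        · intro a _ ha
          refine Finset.sum_eq_zero fun b _ => ?_
          simp [Ne.symm ha]
        · simp
      have h2 : (∑ a : Fin k, ∑ b : Fin k,
          if leftOf u (a, true) (b, true) then
            (cnt [(i, true), (j, false)] (b, false) (a, true) : ℝ) else 0) = 0 := by
        refine Finset.sum_eq_zero fun a _ => Finset.sum_eq_zero fun b _ => ?_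
        rw [cnt_pair_ne _ _ _ _ (Or.inl (by simp))]
        simp
      rw [h1, h2]; ring
    have hB : betaW u [(i, true), (j, false)] = 0 := by
      unfold betaW
      have h1 : (∑ a : Fin k, ∑ b : Fin k,
          if leftOf u (a, false) (b, true) then
            (cnt [(i, true), (j, false)] (a, true) (b, true) : ℝ) else 0) = 0 := by
        refine Finset.sum_eq_zero fun a _ => Finset.sum_eq_zero fun b _ => ?_
        rw [cnt_pair_ne _ _ _ _ (Or.inr (by simp))]
        simp
      have h2 : (∑ a : Fin k, ∑ b : Fin k,
          if leftOf u (a, false) (b, true) then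
            (cnt [(i, true), (j, false)] (b, false) (a, false) : ℝ) else 0) = 0 := by
        refine Finset.sum_eq_zero fun a _ => Finset.sum_eq_zero fun b _ => ?_
        rw [cnt_pair_ne _ _ _ _ (Or.inl (by simp))]
        simp
      rw [h1, h2]; ring
    have hO : omegaW ([(i, true), (j, false)] : List (Letter k)) = -(1 / 2) := by
      simp [omegaW]
    rw [tau, hw2, hA, hB, hO]
    by_cases h : leftOf u (i, false) (j, false)
    · rw [if_pos h]
      constructor
      · intro _; exact h
      · intro _; norm_num
    · rw [if_neg h]
      constructor
      · intro hpos; linarith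
      · intro h'; exact absurd h' h
end

section
/- Let k ≥ 2. The left order ≤_u on F_k induced by an oriented word u extends the lexicographic order on the free monoid A* based on a_1 < a_2 < ... < a_k if and only if u has the form a_1 a_2 ... a_k a_{j_1}^{-1} a_{j_2}^{-1} ... a_{j_k}^{-1} for some permutation (j_1,...,j_k) of (1,...,k). -/
open FreeGroup

namespace Stmt11Aux

variable {k : ℕ}

lemma indexOf_inst {γ : Type*} [DecidableEq γ] [inst : BEq γ] [LawfulBEq γ] (x : γ) (l : List γ) :
    @List.idxOf _ inst x l = @List.idxOf _ instBEqOfDecidableEq x l := by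
  unfold List.idxOf
  congr 1
  funext y
  rw [(beq_eq_decide y x : (y == x) = _),
    (@beq_eq_decide _ instBEqOfDecidableEq instLawfulBEq _ y x : _)]

lemma idxP (x : Letter k) (l : List (Letter k)) :
    @List.idxOf _ instBEqProd x l = @List.idxOf _ instBEqOfDecidableEq x l :=
  indexOf_inst x l

lemma leftOf_iff {u : List (Letter k)} {x y : Letter k} :
    leftOf u x y ↔ @List.idxOf _ instBEqOfDecidableEq x u
      < @List.idxOf _ instBEqOfDecidableEq y u := by
  rw [leftOf, idxP, idxP]

lemma forall_zip_of_chain' {γ : Type*} {R : γ → γ → Prop} :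
    ∀ {L : List γ}, List.IsChain R L → ∀ p ∈ L.zip L.tail, R p.1 p.2
  | [], _, p, hp => by simp at hp
  | [x], _, p, hp => by simp at hp
  | x :: y :: t, h, p, hp => by
      rw [List.isChain_cons_cons] at h
      rw [List.tail_cons, List.zip_cons_cons, List.mem_cons] at hp
      rcases hp with rfl | hp
      · exact h.1
      · exact forall_zip_of_chain' h.2 p hp

lemma reduce_eq_self {k : ℕ} : ∀ {L : List (Letter k)},
    List.IsChain (fun x y => ¬(x.1 = y.1 ∧ x.2 = !y.2)) L → FreeGroup.reduce L = L
  | [], _ => rfl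
  | [x], _ => rfl
  | x :: y :: t, h => by
      rw [List.isChain_cons_cons] at h
      rw [FreeGroup.reduce.cons, reduce_eq_self h.2]
      simp only [if_neg h.1]

lemma cnt_eq_zero {L : List (Letter k)} {x y : Letter k}
    (h : (x, y) ∉ L.zip L.tail) : cnt L x y = 0 :=
  List.count_eq_zero.2 h

lemma one_le_cnt {L : List (Letter k)} {x y : Letter k}
    (h : (x, y) ∈ L.zip L.tail) : 1 ≤ cnt L x y :=
  List.count_pos_iff.2 h

lemma leftOf_total {u : List (Letter k)} (hu : IsOriented u) {x y : Letter k}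
    (hxy : x ≠ y) : leftOf u x y ∨ leftOf u y x := by
  rw [leftOf_iff, leftOf_iff]
  have : @List.idxOf _ instBEqOfDecidableEq x u
      ≠ @List.idxOf _ instBEqOfDecidableEq y u := fun h =>
    hxy ((List.idxOf_inj (hu.2 x)).1 (by rw [idxP, idxP]; exact h))
  omega

lemma leftOf_asymm {u : List (Letter k)} {x y : Letter k}
    (h : leftOf u x y) : ¬ leftOf u y x := by
  rw [leftOf_iff] at *; omega

lemma le_double_sum {f : Fin k → Fin k → ℝ} (hf : ∀ a b, 0 ≤ f a b) (a0 b0 : Fin k) :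
    f a0 b0 ≤ ∑ a : Fin k, ∑ b : Fin k, f a b :=
  le_trans (Finset.single_le_sum (fun b _ => hf a0 b) (Finset.mem_univ b0))
    (Finset.single_le_sum (fun a _ => Finset.sum_nonneg fun b _ => hf a b) (Finset.mem_univ a0))

lemma indexOf_eq_of_get {γ : Type*} [DecidableEq γ] {l : List γ} (hnd : l.Nodup)
    {n : Fin l.length} {x : γ} (h : l.get n = x) :
    @List.idxOf _ instBEqOfDecidableEq x l = n := by
  subst h
  have hm : l.get n ∈ l := l.get_mem _
  have h1 : l.get ⟨l.idxOf (l.get n), List.idxOf_lt_length_iff.2 hm⟩ = l.get n :=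
    List.idxOf_get _
  have := (hnd.get_inj_iff).1 h1
  exact congrArg Fin.val this


/-- `Good x y`: allowed adjacency in a word of shape `negatives ++ positives`
with increasing junction. -/
def Good (x y : Letter k) : Prop :=
  (x.2 = true → y.2 = true) ∧ (x.2 = false → y.2 = true → (x.1 : ℕ) < (y.1 : ℕ))

lemma chain_good (v w : List (Fin k))
    (hvw : ∀ a b : Fin k, v.head? = some a → w.head? = some b → (a : ℕ) < (b : ℕ)) :
    List.IsChain Good
      ((v.map fun a => ((a, false) : Letter k)).reverse ++ (w.map fun a => ((a, true) : Letter k))) := by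
  rw [List.isChain_append]
  refine ⟨?_, ?_, ?_⟩
  · refine (List.pairwise_of_forall_mem_list ?_).isChain
    intro x hx y hy
    rw [List.mem_reverse, List.mem_map] at hx hy
    obtain ⟨a, -, rfl⟩ := hx
    obtain ⟨b, -, rfl⟩ := hy
    exact ⟨fun h => by simp at h, fun _ h => by simp at h⟩
  · refine (List.pairwise_of_forall_mem_list ?_).isChain
    intro x hx y hy
    rw [List.mem_map] at hx hy
    obtain ⟨a, -, rfl⟩ := hx
    obtain ⟨b, -, rfl⟩ := hy
    exact ⟨fun _ => rfl, fun h => by simp at h⟩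
  · intro x hx y hy
    rw [List.getLast?_reverse, List.head?_map] at hx
    rw [List.head?_map] at hy
    cases hv : v.head? with
    | none => rw [hv] at hx; simp at hx
    | some a =>
      cases hw : w.head? with
      | none => rw [hw] at hy; simp at hy
      | some b =>
        rw [hv] at hx; rw [hw] at hy
        simp only [Option.map_some, Option.mem_def, Option.some_inj] at hx hy
        subst hx; subst hy
        exact ⟨fun h => by simp at h, fun _ _ => hvw a b hv hw⟩

lemma good_reduced {L : List (Letter k)} (h : List.IsChain Good L) :
    List.IsChain (fun x y : Letter k => ¬(x.1 = y.1 ∧ x.2 = !y.2)) L := by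
  refine h.imp ?_
  rintro ⟨a, xb⟩ ⟨b, yb⟩ hg ⟨h1, h2⟩
  dsimp at h1 h2 hg
  subst h1
  cases yb
  · exact absurd (hg.1 (by simpa using h2)) (by simp)
  · have := hg.2 (by simpa using h2) rfl
    simp at this


/-- The canonical oriented word: positives in order, then negatives permuted by `σ`. -/
def u0 (σ : Equiv.Perm (Fin k)) : List (Letter k) :=
  ((List.finRange k).map fun i => ((i : Fin k), true))
    ++ ((List.finRange k).map fun i => (σ i, false))

lemma u0_length (σ : Equiv.Perm (Fin k)) : (u0 σ).length = k + k := by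
  simp [u0]

lemma u0_nodup (σ : Equiv.Perm (Fin k)) : (u0 σ).Nodup := by
  rw [u0, List.nodup_append]
  refine ⟨List.Nodup.map (fun a b h => by simpa using h) (List.nodup_finRange k),
    List.Nodup.map (fun a b h => by
      have : σ a = σ b := by simpa using h
      exact σ.injective this) (List.nodup_finRange k), ?_⟩
  intro x hx y hy
  rw [List.mem_map] at hx hy
  obtain ⟨a, -, rfl⟩ := hx
  obtain ⟨b, -, hb⟩ := hy
  subst hb; simp

lemma u0_get_pos (σ : Equiv.Perm (Fin k)) (a : Fin k) (h : (a : ℕ) < (u0 σ).length) :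
    (u0 σ).get ⟨a, h⟩ = (a, true) := by
  have ha : (a : ℕ) < ((List.finRange k).map fun i => (((i : Fin k), true) : Letter k)).length := by
    simpa using a.isLt
  rw [List.get_eq_getElem]
  unfold u0
  rw [List.getElem_append_left ha]
  simp [List.getElem_finRange]

lemma u0_idx_pos (σ : Equiv.Perm (Fin k)) (a : Fin k) :
    @List.idxOf _ instBEqOfDecidableEq ((a, true) : Letter k) (u0 σ) = (a : ℕ) := by
  have h : (a : ℕ) < (u0 σ).length := by rw [u0_length]; omega
  exact indexOf_eq_of_get (u0_nodup σ) (u0_get_pos σ a h)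

lemma u0_idx_neg (σ : Equiv.Perm (Fin k)) (a : Fin k) :
    k ≤ @List.idxOf _ instBEqOfDecidableEq ((a, false) : Letter k) (u0 σ) := by
  have hnm : ((a, false) : Letter k) ∉ (List.finRange k).map fun i => (((i : Fin k), true) : Letter k) := by
    intro hm
    rw [List.mem_map] at hm
    obtain ⟨b, -, hb⟩ := hm
    simp at hb
  unfold u0
  rw [← idxP, List.idxOf_append_of_notMem hnm]
  simp

lemma u0_not_leftOf_ft (σ : Equiv.Perm (Fin k)) (a b : Fin k) :
    ¬ leftOf (u0 σ) (a, false) (b, true) := by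
  rw [leftOf_iff, u0_idx_pos]
  have h1 := u0_idx_neg σ a
  have h2 := b.isLt
  omega

lemma u0_leftOf_tt (σ : Equiv.Perm (Fin k)) (a b : Fin k) :
    leftOf (u0 σ) (a, true) (b, true) ↔ (a : ℕ) < (b : ℕ) := by
  rw [leftOf_iff, u0_idx_pos, u0_idx_pos]

lemma base (σ : Equiv.Perm (Fin k)) (v w : List (Fin k)) (hw : w ≠ [])
    (hvw : ∀ a b : Fin k, v.head? = some a → w.head? = some b → (a : ℕ) < (b : ℕ)) :
    0 < tau (u0 σ) ((FreeGroup.mk (v.map fun a => ((a, true) : Letter k)))⁻¹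
        * FreeGroup.mk (w.map fun a => ((a, true) : Letter k))) := by
  set L := (v.map fun a => ((a, false) : Letter k)).reverse
      ++ (w.map fun a => ((a, true) : Letter k)) with hLdef
  have hch : List.IsChain Good L := chain_good v w hvw
  have hinv : FreeGroup.invRev (v.map fun a => ((a, true) : Letter k))
      = (v.map fun a => ((a, false) : Letter k)).reverse := by
    simp [FreeGroup.invRev, List.map_map, Function.comp_def]
  have hgw : ((FreeGroup.mk (v.map fun a => ((a, true) : Letter k)))⁻¹
      * FreeGroup.mk (w.map fun a => ((a, true) : Letter k))).toWord = L := by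
    rw [FreeGroup.inv_mk, FreeGroup.mul_mk, FreeGroup.toWord_mk, hinv]
    exact reduce_eq_self (good_reduced hch)
  have hzip := forall_zip_of_chain' hch
  rw [tau, hgw]
  have ha : alphaW (u0 σ) L = 0 := by
    rw [alphaW]
    have h1 : (∑ a : Fin k, ∑ b : Fin k,
        if leftOf (u0 σ) (a, false) (b, false) then (cnt L (a, true) (b, false) : ℝ) else 0) = 0 :=
      Finset.sum_eq_zero fun a _ => Finset.sum_eq_zero fun b _ => by
        have hc : cnt L (a, true) (b, false) = 0 :=
          cnt_eq_zero fun hm => by have := (hzip _ hm).1 rfl; simp at this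
        rw [hc]; simp
    have h2 : (∑ a : Fin k, ∑ b : Fin k,
        if leftOf (u0 σ) (a, true) (b, true) then (cnt L (b, false) (a, true) : ℝ) else 0) = 0 :=
      Finset.sum_eq_zero fun a _ => Finset.sum_eq_zero fun b _ => by
        by_cases hcond : leftOf (u0 σ) (a, true) (b, true)
        · have hab : (a : ℕ) < (b : ℕ) := (u0_leftOf_tt σ a b).1 hcond
          have hc : cnt L (b, false) (a, true) = 0 := cnt_eq_zero fun hm => by
            have := (hzip _ hm).2 rfl rfl
            simp only at this
            omega
          rw [if_pos hcond, hc]; simp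
        · rw [if_neg hcond]
    rw [h1, h2]; ring
  have hb : betaW (u0 σ) L = 0 := by
    rw [betaW]
    have h1 : (∑ a : Fin k, ∑ b : Fin k,
        if leftOf (u0 σ) (a, false) (b, true) then (cnt L (a, true) (b, true) : ℝ) else 0) = 0 :=
      Finset.sum_eq_zero fun a _ => Finset.sum_eq_zero fun b _ => by
        rw [if_neg (u0_not_leftOf_ft σ a b)]
    have h2 : (∑ a : Fin k, ∑ b : Fin k,
        if leftOf (u0 σ) (a, false) (b, true) then (cnt L (b, false) (a, false) : ℝ) else 0) = 0 :=
      Finset.sum_eq_zero fun a _ => Finset.sum_eq_zero fun b _ => by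
        rw [if_neg (u0_not_leftOf_ft σ a b)]
    rw [h1, h2]; ring
  have ho : omegaW L = 1 / 2 := by
    obtain ⟨w', c, rfl⟩ := w.eq_nil_or_concat.resolve_left hw
    have hlast : L.getLast? = some ((c, true) : Letter k) := by
      rw [hLdef, List.concat_eq_append, List.map_append, ← List.append_assoc]
      simpa using List.getLast?_concat _
    rw [omegaW, hlast]
    simp
  rw [ha, hb, ho]
  norm_num

lemma direction_mpr (σ : Equiv.Perm (Fin k)) (v w : List (Fin k))
    (h : List.Lex (· < ·) v w) :
    0 < tau (u0 σ) ((FreeGroup.mk (v.map fun a => ((a, true) : Letter k)))⁻¹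
        * FreeGroup.mk (w.map fun a => ((a, true) : Letter k))) := by
  induction h with
  | nil =>
    exact base σ [] _ (List.cons_ne_nil _ _) (fun a b ha _ => by simp at ha)
  | @rel a l₁ b l₂ hab =>
    refine base σ _ _ (List.cons_ne_nil _ _) (fun a' b' ha hb => ?_)
    simp only [List.head?_cons, Option.some_inj] at ha hb
    subst ha; subst hb
    exact hab
  | @cons a l₁ l₂ _ ih =>
    have hsplit : ∀ (l : List (Fin k)),
        FreeGroup.mk ((a :: l).map fun x => ((x, true) : Letter k))
          = FreeGroup.mk [((a, true) : Letter k)]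
            * FreeGroup.mk (l.map fun x => ((x, true) : Letter k)) := by
      intro l
      rw [FreeGroup.mul_mk]
      rfl
    rw [hsplit, hsplit, mul_inv_rev, mul_assoc, inv_mul_cancel_left]
    exact ih


section Fwd

variable {u : List (Letter k)}

lemma step1 (hu : IsOriented u)
    (H : ∀ v w : List (Fin k), List.Lex (· < ·) v w →
      0 < tau u ((FreeGroup.mk (v.map fun a => (a, true)))⁻¹
                  * FreeGroup.mk (w.map fun a => (a, true))))
    {a b : Fin k} (hab : (a : ℕ) < (b : ℕ)) : leftOf u (a, true) (b, true) := by
  have hne : a ≠ b := fun h => by subst h; omega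
  have hne' : ((a, true) : Letter k) ≠ (b, true) := by
    simp only [ne_eq, Prod.mk.injEq, and_true]; exact hne
  rcases leftOf_total hu hne' with h | h
  · exact h
  exfalso
  have hlex : List.Lex (· < ·) [a] [b] := List.Lex.rel (by rwa [Fin.lt_def])
  have htau := H [a] [b] hlex
  have hL : ((FreeGroup.mk ([a].map fun x => ((x, true) : Letter k)))⁻¹
      * FreeGroup.mk ([b].map fun x => ((x, true) : Letter k))).toWord
      = [((a, false) : Letter k), (b, true)] := by
    rw [FreeGroup.inv_mk, FreeGroup.mul_mk, FreeGroup.toWord_mk]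
    have he : FreeGroup.invRev ([a].map fun x => ((x, true) : Letter k))
        ++ [b].map (fun x => ((x, true) : Letter k))
        = [((a, false) : Letter k), (b, true)] := by
      simp [FreeGroup.invRev]
    rw [he]
    apply reduce_eq_self
    refine List.isChain_cons_cons.2 ⟨?_, List.isChain_singleton _⟩
    rintro ⟨h1, -⟩
    exact hne h1
  rw [tau, hL] at htau
  set L : List (Letter k) := [((a, false) : Letter k), (b, true)] with hLdef
  have hzip : L.zip L.tail = [((((a, false) : Letter k)), ((b, true) : Letter k))] := rfl
  have hA1 : (∑ x : Fin k, ∑ y : Fin k,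
      if leftOf u (x, false) (y, false) then (cnt L (x, true) (y, false) : ℝ) else 0) = 0 :=
    Finset.sum_eq_zero fun x _ => Finset.sum_eq_zero fun y _ => by
      have hc : cnt L (x, true) (y, false) = 0 :=
        cnt_eq_zero (by rw [hzip]; simp)
      rw [hc]; simp
  have hA2 : (1 : ℝ) ≤ ∑ x : Fin k, ∑ y : Fin k,
      if leftOf u (x, true) (y, true) then (cnt L (y, false) (x, true) : ℝ) else 0 := by
    have hnn : ∀ x y : Fin k,
        (0:ℝ) ≤ if leftOf u (x, true) (y, true) then (cnt L (y, false) (x, true) : ℝ) else 0 :=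
      fun x y => by positivity
    refine le_trans ?_ (le_double_sum hnn b a)
    rw [if_pos h]
    have hcm : (1 : ℕ) ≤ cnt L (a, false) (b, true) :=
      one_le_cnt (by rw [hzip]; simp)
    exact_mod_cast hcm
  have hB1 : (∑ x : Fin k, ∑ y : Fin k,
      if leftOf u (x, false) (y, true) then (cnt L (x, true) (y, true) : ℝ) else 0) = 0 :=
    Finset.sum_eq_zero fun x _ => Finset.sum_eq_zero fun y _ => by
      have hc : cnt L (x, true) (y, true) = 0 :=
        cnt_eq_zero (by rw [hzip]; simp)
      rw [hc]; simp
  have hB2 : (0 : ℝ) ≤ ∑ x : Fin k, ∑ y : Fin k,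
      if leftOf u (x, false) (y, true) then (cnt L (y, false) (x, false) : ℝ) else 0 :=
    Finset.sum_nonneg fun x _ => Finset.sum_nonneg fun y _ => by positivity
  have hO : omegaW L = 1 / 2 := by rw [omegaW]; rfl
  rw [alphaW, betaW, hA1, hB1, hO] at htau
  linarith

lemma step2 (hk : 2 ≤ k) (hu : IsOriented u)
    (H : ∀ v w : List (Fin k), List.Lex (· < ·) v w →
      0 < tau u ((FreeGroup.mk (v.map fun a => (a, true)))⁻¹
                  * FreeGroup.mk (w.map fun a => (a, true))))
    (a b : Fin k) : leftOf u (b, true) (a, false) := by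
  have hne' : ((b, true) : Letter k) ≠ (a, false) := by simp
  rcases leftOf_total hu hne' with h | h
  · exact h
  exfalso
  set c0 : Fin k := ⟨0, by omega⟩ with hc0
  set c1 : Fin k := ⟨1, by omega⟩ with hc1
  have hlex : List.Lex (· < ·) [c0, a, b] [c1] := List.Lex.rel (by rw [Fin.lt_def]; simp [hc0, hc1])
  have htau := H [c0, a, b] [c1] hlex
  have hL : ((FreeGroup.mk ([c0, a, b].map fun x => ((x, true) : Letter k)))⁻¹
      * FreeGroup.mk ([c1].map fun x => ((x, true) : Letter k))).toWord
      = [((b, false) : Letter k), (a, false), (c0, false), (c1, true)] := by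
    rw [FreeGroup.inv_mk, FreeGroup.mul_mk, FreeGroup.toWord_mk]
    have he : FreeGroup.invRev ([c0, a, b].map fun x => ((x, true) : Letter k))
        ++ [c1].map (fun x => ((x, true) : Letter k))
        = [((b, false) : Letter k), (a, false), (c0, false), (c1, true)] := by
      simp [FreeGroup.invRev]
    rw [he]
    apply reduce_eq_self
    refine List.isChain_cons_cons.2 ⟨?_, List.isChain_cons_cons.2 ⟨?_,
      List.isChain_cons_cons.2 ⟨?_, List.isChain_singleton _⟩⟩⟩
    · rintro ⟨-, h2⟩; simp at h2
    · rintro ⟨-, h2⟩; simp at h2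
    · rintro ⟨h1, -⟩
      rw [hc0, hc1, Fin.ext_iff] at h1
      simp at h1
  rw [tau, hL] at htau
  set L : List (Letter k) := [((b, false) : Letter k), (a, false), (c0, false), (c1, true)]
    with hLdef
  have hzip : L.zip L.tail
      = [((((b, false) : Letter k)), ((a, false) : Letter k)),
         (((a, false) : Letter k), ((c0, false) : Letter k)),
         (((c0, false) : Letter k), ((c1, true) : Letter k))] := rfl
  have hA1 : (∑ x : Fin k, ∑ y : Fin k,
      if leftOf u (x, false) (y, false) then (cnt L (x, true) (y, false) : ℝ) else 0) = 0 :=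
    Finset.sum_eq_zero fun x _ => Finset.sum_eq_zero fun y _ => by
      have hc : cnt L (x, true) (y, false) = 0 :=
        cnt_eq_zero (by rw [hzip]; simp)
      rw [hc]; simp
  have hA2 : (0 : ℝ) ≤ ∑ x : Fin k, ∑ y : Fin k,
      if leftOf u (x, true) (y, true) then (cnt L (y, false) (x, true) : ℝ) else 0 :=
    Finset.sum_nonneg fun x _ => Finset.sum_nonneg fun y _ => by positivity
  have hB1 : (∑ x : Fin k, ∑ y : Fin k,
      if leftOf u (x, false) (y, true) then (cnt L (x, true) (y, true) : ℝ) else 0) = 0 :=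
    Finset.sum_eq_zero fun x _ => Finset.sum_eq_zero fun y _ => by
      have hc : cnt L (x, true) (y, true) = 0 :=
        cnt_eq_zero (by rw [hzip]; simp)
      rw [hc]; simp
  have hB2 : (1 : ℝ) ≤ ∑ x : Fin k, ∑ y : Fin k,
      if leftOf u (x, false) (y, true) then (cnt L (y, false) (x, false) : ℝ) else 0 := by
    have hnn : ∀ x y : Fin k,
        (0:ℝ) ≤ if leftOf u (x, false) (y, true) then (cnt L (y, false) (x, false) : ℝ) else 0 :=
      fun x y => by positivity
    refine le_trans ?_ (le_double_sum hnn a b)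
    rw [if_pos h]
    have hcm : (1 : ℕ) ≤ cnt L (b, false) (a, false) :=
      one_le_cnt (by rw [hzip]; simp)
    exact_mod_cast hcm
  have hO : omegaW L = 1 / 2 := by rw [omegaW]; rfl
  rw [alphaW, betaW, hA1, hB1, hO] at htau
  linarith

end Fwd


lemma build_perm {u : List (Letter k)} (hk : 2 ≤ k) (hu : IsOriented u)
    (h1 : ∀ a b : Fin k, (a : ℕ) < (b : ℕ) → leftOf u (a, true) (b, true))
    (h2 : ∀ a b : Fin k, leftOf u (b, true) (a, false)) :
    ∃ σ : Equiv.Perm (Fin k),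
      u = ((List.finRange k).map fun i => ((i : Fin k), true))
          ++ ((List.finRange k).map fun i => (σ i, false)) := by
  have hnd := hu.1
  have hlen : u.length = k + k := by
    have ht : u.toFinset = Finset.univ :=
      Finset.eq_univ_iff_forall.2 fun x => List.mem_toFinset.2 (hu.2 x)
    have hc := List.toFinset_card_of_nodup hnd
    rw [ht, Finset.card_univ] at hc
    have : Fintype.card (Letter k) = k * 2 := by
      rw [Fintype.card_prod, Fintype.card_bool, Fintype.card_fin]
    omega
  set p : Fin k → ℕ := fun i => @List.idxOf _ instBEqOfDecidableEq ((i, true) : Letter k) u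
    with hp
  set q : Fin k → ℕ := fun i => @List.idxOf _ instBEqOfDecidableEq ((i, false) : Letter k) u
    with hq
  have hplt : ∀ i, p i < u.length := fun i => (@List.idxOf_lt_length_iff _ instBEqOfDecidableEq _ _ _).2 (hu.2 _)
  have hqlt : ∀ i, q i < u.length := fun i => (@List.idxOf_lt_length_iff _ instBEqOfDecidableEq _ _ _).2 (hu.2 _)
  have hpq : ∀ i j, p i < q j := fun i j => by
    have := h2 j i
    rwa [leftOf_iff] at this
  have hpmono : ∀ i j : Fin k, (i : ℕ) < (j : ℕ) → p i < p j := fun i j hij => by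
    have := h1 i j hij
    rwa [leftOf_iff] at this
  have hidx : ∀ (n : Fin u.length), @List.idxOf _ instBEqOfDecidableEq (u.get n) u = (n : ℕ) :=
    fun n => indexOf_eq_of_get hnd rfl
  have hlow : ∀ n : ℕ, ∀ hn : n < k, n ≤ p ⟨n, hn⟩ := by
    intro n
    induction n with
    | zero => intro hn; exact Nat.zero_le _
    | succ m ih =>
      intro hn
      have hm : m < k := by omega
      have hlt := hpmono ⟨m, hm⟩ ⟨m + 1, hn⟩ (by simp)
      have := ih hm
      omega
  have hup : ∀ i : Fin k, p i ≤ (i : ℕ) := by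
    intro i
    by_contra hcon
    push_neg at hcon
    have key : ∀ m : Fin (p i), ∃ j : Fin k, (j : ℕ) < (i : ℕ) ∧
        u.get ⟨(m : ℕ), lt_trans m.isLt (hplt i)⟩ = (j, true) := by
      intro m
      have hxi : @List.idxOf _ instBEqOfDecidableEq
          (u.get ⟨(m : ℕ), lt_trans m.isLt (hplt i)⟩) u = (m : ℕ) := hidx _
      set x := u.get ⟨(m : ℕ), lt_trans m.isLt (hplt i)⟩ with hxdef
      rcases hb : x.2 with _ | _
      · exfalso
        have hxe : x = (x.1, false) := Prod.ext rfl hb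
        have hqx : q x.1 = (m : ℕ) := by
          have hx2 := hxi
          rw [hxe] at hx2
          exact hx2
        have := hpq i x.1
        have := m.isLt
        omega
      · have hxe : x = (x.1, true) := Prod.ext rfl hb
        have hpx : p x.1 = (m : ℕ) := by
          have hx2 := hxi
          rw [hxe] at hx2
          exact hx2
        have hmi := m.isLt
        have hlt : (x.1 : ℕ) < (i : ℕ) := by
          rcases lt_trichotomy (x.1 : ℕ) (i : ℕ) with hlt | heq | hgt
          · exact hlt
          · exfalso
            have : x.1 = i := Fin.ext heq
            rw [this] at hpx
            omega
          · exfalso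
            have := hpmono i x.1 hgt
            omega
        exact ⟨x.1, hlt, hxe⟩
    choose f hf1 hf2 using key
    have ginj : Function.Injective (fun m : Fin (p i) => (⟨(f m : ℕ), hf1 m⟩ : Fin (i : ℕ))) := by
      intro m1 m2 he
      simp only [Fin.mk.injEq] at he
      have hfe : f m1 = f m2 := Fin.ext he
      have e1 := hf2 m1
      have e2 := hf2 m2
      rw [hfe] at e1
      have := hnd.get_inj_iff.1 (e1.trans e2.symm)
      have := congrArg Fin.val this
      exact Fin.ext this
    have hcard := Fintype.card_le_of_injective _ ginj
    simp only [Fintype.card_fin] at hcard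
    omega
  have hpi : ∀ i : Fin k, p i = (i : ℕ) := fun i => le_antisymm (hup i) (hlow (i : ℕ) i.isLt)
  have hkj : ∀ j : Fin k, k + (j : ℕ) < u.length := fun j => by
    have := j.isLt; omega
  have hneg : ∀ j : Fin k, (u.get ⟨k + (j : ℕ), hkj j⟩).2 = false := by
    intro j
    by_contra hb
    rw [Bool.not_eq_false] at hb
    have hxi := hidx ⟨k + (j : ℕ), hkj j⟩
    set x := u.get ⟨k + (j : ℕ), hkj j⟩ with hxdef
    have hxe : x = (x.1, true) := Prod.ext rfl hb
    have hpx : p x.1 = k + (j : ℕ) := by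
      have hx2 := hxi
      rw [hxe] at hx2
      exact hx2
    have := hpi x.1
    have := x.1.isLt
    omega
  refine ⟨Equiv.ofBijective (fun j : Fin k => (u.get ⟨k + (j : ℕ), hkj j⟩).1)
    (Finite.injective_iff_bijective.1 ?_), ?_⟩
  · intro j1 j2 he
    dsimp at he
    have hgeq : u.get ⟨k + (j1 : ℕ), hkj j1⟩ = u.get ⟨k + (j2 : ℕ), hkj j2⟩ := by
      have e1 : u.get ⟨k + (j1 : ℕ), hkj j1⟩ = ((u.get ⟨k + (j1 : ℕ), hkj j1⟩).1, false) :=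
        Prod.ext rfl (hneg j1)
      have e2 : u.get ⟨k + (j2 : ℕ), hkj j2⟩ = ((u.get ⟨k + (j2 : ℕ), hkj j2⟩).1, false) :=
        Prod.ext rfl (hneg j2)
      rw [e1, e2]
      simp only [List.get_eq_getElem]
      rw [he]
    have := hnd.get_inj_iff.1 hgeq
    have := congrArg Fin.val this
    simp only at this
    exact Fin.ext (by omega)
  · apply List.ext_get
    · simp [hlen]
    · intro n hn1 hn2
      simp only [List.get_eq_getElem]
      rcases lt_or_ge n k with hnk | hnk
      · have hm : ((⟨n, hnk⟩ : Fin k), true) ∈ u := hu.2 _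
        have hidxlt : @List.idxOf _ instBEqOfDecidableEq ((⟨n, hnk⟩ : Fin k), true) u
            < u.length := (@List.idxOf_lt_length_iff _ instBEqOfDecidableEq _ _ _).2 hm
        have hget := @List.idxOf_get _ instBEqOfDecidableEq _ _ _ hidxlt
        have hpn : @List.idxOf _ instBEqOfDecidableEq ((⟨n, hnk⟩ : Fin k), true) u = n :=
          hpi ⟨n, hnk⟩
        have hfeq : (⟨@List.idxOf _ instBEqOfDecidableEq ((⟨n, hnk⟩ : Fin k), true) u, hidxlt⟩
            : Fin u.length) = ⟨n, hn1⟩ := Fin.ext hpn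
        rw [hfeq] at hget
        rw [List.get_eq_getElem] at hget
        rw [hget]
        have hlt1 : n < (((List.finRange k).map fun i => (((i : Fin k), true) : Letter k))).length := by
          simpa using hnk
        rw [List.getElem_append_left hlt1]
        simp [List.getElem_finRange]
      · have hj : n - k < k := by
          rw [hlen] at hn1; omega
        have hne : n = k + ((⟨n - k, hj⟩ : Fin k) : ℕ) := by simp; omega
        have hfeq : (⟨n, hn1⟩ : Fin u.length) = ⟨k + ((⟨n - k, hj⟩ : Fin k) : ℕ), hkj _⟩ :=
          Fin.ext hne
        have e1 : u.get ⟨k + ((⟨n - k, hj⟩ : Fin k) : ℕ), hkj _⟩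
            = ((u.get ⟨k + ((⟨n - k, hj⟩ : Fin k) : ℕ), hkj _⟩).1, false) :=
          Prod.ext rfl (hneg _)
        rw [List.get_eq_getElem] at e1
        have e2 : u[n]'hn1 = u[k + ((⟨n - k, hj⟩ : Fin k) : ℕ)]'(hkj _) := by
          congr 1
        rw [e2, e1]
        have hge : (((List.finRange k).map fun i => (((i : Fin k), true) : Letter k))).length ≤ n := by
          simpa using hnk
        rw [List.getElem_append_right hge]
        simp only [List.getElem_map, List.getElem_finRange, List.length_map,
          List.length_finRange, Equiv.ofBijective_apply]
        congr 1

end Stmt11Aux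

theorem stmt11 {k : ℕ} (hk : 2 ≤ k) (u : List (Letter k)) (hu : IsOriented u) :
    (∀ v w : List (Fin k), List.Lex (· < ·) v w →
      0 < tau u ((FreeGroup.mk (v.map fun a => (a, true)))⁻¹
                  * FreeGroup.mk (w.map fun a => (a, true))))
    ↔ ∃ σ : Equiv.Perm (Fin k),
        u = ((List.finRange k).map fun i => ((i : Fin k), true))
            ++ ((List.finRange k).map fun i => (σ i, false)) := by
  constructor
  · intro H
    exact Stmt11Aux.build_perm hk hu (fun a b hab => Stmt11Aux.step1 hu H hab)
      (Stmt11Aux.step2 hk hu H)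
  · rintro ⟨σ, rfl⟩
    intro v w hlex
    exact Stmt11Aux.direction_mpr σ v w hlex
end
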